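/- arXiv:2503.06022 — 8 statements merged into one kernel-verified Lean document; each statement's English description precedes it below -/
import Mathlib

section
/- If f, g : ℝ → ℝ are nonconstant polynomial functions and φ : ℝ → ℝ is a homeomorphism with g ∘ φ = f, then φ is semialgebraic. -/
/-- Semialgebraic subsets of ℝⁿ: the smallest collection containing zero sets and
positivity sets of polynomials and closed under union, intersection, complement. -/
inductive IsSemialgebraicSet {n : ℕ} : Set (Fin n → ℝ) → Prop
  | zero_set (p : MvPolynomial (Fin n) ℝ) :
      IsSemialgebraicSet {x | MvPolynomial.eval x p = 0}
  | pos_set (p : MvPolynomial (Fin n) ℝ) :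
      IsSemialgebraicSet {x | 0 < MvPolynomial.eval x p}
  | union {s t : Set (Fin n → ℝ)} :
      IsSemialgebraicSet s → IsSemialgebraicSet t → IsSemialgebraicSet (s ∪ t)
  | inter {s t : Set (Fin n → ℝ)} :
      IsSemialgebraicSet s → IsSemialgebraicSet t → IsSemialgebraicSet (s ∩ t)
  | compl {s : Set (Fin n → ℝ)} :
      IsSemialgebraicSet s → IsSemialgebraicSet sᶜ

lemma my_eval_aeval (r : Polynomial ℝ) (i : Fin 2) (x : Fin 2 → ℝ) :
    MvPolynomial.eval x (Polynomial.aeval (MvPolynomial.X i : MvPolynomial (Fin 2) ℝ) r) = r.eval (x i) := by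
  induction r using Polynomial.induction_on' with
  | add p q hp hq => simp [hp, hq]
  | monomial n a => simp [Polynomial.aeval_monomial]

lemma my_sa_univ : IsSemialgebraicSet (Set.univ : Set (Fin 2 → ℝ)) := by
  have := IsSemialgebraicSet.zero_set (0 : MvPolynomial (Fin 2) ℝ)
  simpa using this

lemma my_sa_ge (i : Fin 2) (c : ℝ) : IsSemialgebraicSet {x : Fin 2 → ℝ | c ≤ x i} := by
  have h1 := IsSemialgebraicSet.zero_set (MvPolynomial.X i - MvPolynomial.C c : MvPolynomial (Fin 2) ℝ)
  have h2 := IsSemialgebraicSet.pos_set (MvPolynomial.X i - MvPolynomial.C c : MvPolynomial (Fin 2) ℝ)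
  have := h1.union h2
  convert this using 1
  ext x
  simp only [Set.mem_setOf_eq, Set.mem_union, map_sub, MvPolynomial.eval_X, MvPolynomial.eval_C]
  constructor
  · intro hx; rcases eq_or_lt_of_le hx with h | h
    · exact Or.inl (by linarith)
    · exact Or.inr (by linarith)
  · rintro (h | h) <;> linarith

lemma my_sa_le (i : Fin 2) (c : ℝ) : IsSemialgebraicSet {x : Fin 2 → ℝ | x i ≤ c} := by
  have h1 := IsSemialgebraicSet.zero_set (MvPolynomial.C c - MvPolynomial.X i : MvPolynomial (Fin 2) ℝ)
  have h2 := IsSemialgebraicSet.pos_set (MvPolynomial.C c - MvPolynomial.X i : MvPolynomial (Fin 2) ℝ)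
  have := h1.union h2
  convert this using 1
  ext x
  simp only [Set.mem_setOf_eq, Set.mem_union, map_sub, MvPolynomial.eval_X, MvPolynomial.eval_C]
  constructor
  · intro hx; rcases eq_or_lt_of_le hx with h | h
    · exact Or.inl (by linarith)
    · exact Or.inr (by linarith)
  · rintro (h | h) <;> linarith

lemma my_sa_biInter (s : Finset ℝ) (f : ℝ → Set (Fin 2 → ℝ))
    (hf : ∀ c ∈ s, IsSemialgebraicSet (f c)) :
    IsSemialgebraicSet (⋂ c ∈ s, f c) := by
  induction s using Finset.induction_on with
  | empty => simpa using my_sa_univ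
  | insert _ _ hni ih =>
    rw [Finset.set_biInter_insert]
    exact (hf _ (Finset.mem_insert_self _ _)).inter
      (ih fun c hc => hf c (Finset.mem_insert_of_mem hc))


/-- If f, g are nonconstant polynomial functions and φ is a homeomorphism of ℝ with
g ∘ φ = f, then φ is semialgebraic (its graph is a semialgebraic subset of ℝ²). -/
theorem stmt0 (p q : Polynomial ℝ) (hp : 0 < p.natDegree) (hq : 0 < q.natDegree)
    (φ : ℝ ≃ₜ ℝ) (h : ∀ t : ℝ, q.eval (φ t) = p.eval t) :
    IsSemialgebraicSet {x : Fin 2 → ℝ | x 1 = φ (x 0)} := by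
  have hq' : q.derivative ≠ 0 := by
    intro h0
    have := Polynomial.natDegree_eq_zero_of_derivative_eq_zero h0
    omega
  set R : Finset ℝ := q.derivative.roots.toFinset with hR
  -- the algebraic set q(y) = p(t)
  set P : MvPolynomial (Fin 2) ℝ :=
    Polynomial.aeval (MvPolynomial.X 1) q - Polynomial.aeval (MvPolynomial.X 0) p with hP
  have hPeval : ∀ x : Fin 2 → ℝ, MvPolynomial.eval x P = q.eval (x 1) - p.eval (x 0) := by
    intro x; rw [hP, map_sub, my_eval_aeval, my_eval_aeval]
  -- graph equals Z ∩ big intersection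
  have key : {x : Fin 2 → ℝ | x 1 = φ (x 0)} =
      {x : Fin 2 → ℝ | MvPolynomial.eval x P = 0} ∩
      ⋂ c ∈ R, (({x : Fin 2 → ℝ | c ≤ x 1} ∩ {x | c ≤ φ (x 0)}) ∪
                ({x : Fin 2 → ℝ | x 1 ≤ c} ∩ {x | φ (x 0) ≤ c})) := by
    ext x
    simp only [Set.mem_setOf_eq, Set.mem_inter_iff, Set.mem_iInter, Set.mem_union, hPeval]
    constructor
    · intro hx
      refine ⟨by rw [hx, h]; ring, fun c _ => ?_⟩
      rcases le_total c (x 1) with hc | hc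
      · exact Or.inl ⟨hc, by rwa [← hx]⟩
      · exact Or.inr ⟨hc, by rwa [← hx]⟩
    · rintro ⟨hz, hint⟩
      have hz' : q.eval (x 1) = q.eval (φ (x 0)) := by rw [h]; linarith
      by_contra hne
      have rolle : ∀ u v : ℝ, u < v → q.eval u = q.eval v →
          ∃ c ∈ Set.Ioo u v, c ∈ R := by
        intro u v huv heq
        obtain ⟨c, hc, hc'⟩ := exists_deriv_eq_zero huv q.continuousOn heq
        refine ⟨c, hc, ?_⟩
        rw [hR, Multiset.mem_toFinset, Polynomial.mem_roots hq']
        rwa [Polynomial.deriv] at hc'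
      rcases lt_or_gt_of_ne hne with hlt | hlt
      · obtain ⟨c, hc, hcR⟩ := rolle _ _ hlt hz'
        rcases hint c hcR with ⟨h1, _⟩ | ⟨_, h2⟩
        · exact absurd h1 (not_le.2 hc.1)
        · exact absurd h2 (not_le.2 hc.2)
      · obtain ⟨c, hc, hcR⟩ := rolle _ _ hlt hz'.symm
        rcases hint c hcR with ⟨_, h1⟩ | ⟨h2, _⟩
        · exact absurd h1 (not_le.2 hc.1)
        · exact absurd h2 (not_le.2 hc.2)
  rw [key]
  refine (IsSemialgebraicSet.zero_set P).inter (my_sa_biInter _ _ fun c _ => ?_)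
  -- semialgebraicity of the φ-conditions via monotonicity
  rcases φ.continuous.strictMono_of_inj φ.injective with hm | hm
  · have e1 : {x : Fin 2 → ℝ | c ≤ φ (x 0)} = {x : Fin 2 → ℝ | φ.symm c ≤ x 0} := by
      ext x
      simp only [Set.mem_setOf_eq]
      have := hm.le_iff_le (a := φ.symm c) (b := x 0)
      rw [Homeomorph.apply_symm_apply] at this
      exact this
    have e2 : {x : Fin 2 → ℝ | φ (x 0) ≤ c} = {x : Fin 2 → ℝ | x 0 ≤ φ.symm c} := by
      ext x
      simp only [Set.mem_setOf_eq]
      have := hm.le_iff_le (a := x 0) (b := φ.symm c)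
      rw [Homeomorph.apply_symm_apply] at this
      exact this
    rw [e1, e2]
    exact ((my_sa_ge 1 c).inter (my_sa_ge 0 _)).union ((my_sa_le 1 c).inter (my_sa_le 0 _))
  · have e1 : {x : Fin 2 → ℝ | c ≤ φ (x 0)} = {x : Fin 2 → ℝ | x 0 ≤ φ.symm c} := by
      ext x
      simp only [Set.mem_setOf_eq]
      have := hm.le_iff_ge (a := φ.symm c) (b := x 0)
      rw [Homeomorph.apply_symm_apply] at this
      exact this
    have e2 : {x : Fin 2 → ℝ | φ (x 0) ≤ c} = {x : Fin 2 → ℝ | φ.symm c ≤ x 0} := by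
      ext x
      simp only [Set.mem_setOf_eq]
      have := hm.le_iff_ge (a := x 0) (b := φ.symm c)
      rw [Homeomorph.apply_symm_apply] at this
      exact this
    rw [e1, e2]
    exact ((my_sa_ge 1 c).inter (my_sa_le 0 _)).union ((my_sa_le 1 c).inter (my_sa_ge 0 _))
end

section
/- If f, g : ℝ → ℝ are nonconstant polynomial functions and there exist a bi-Lipschitz homeomorphism φ : ℝ → ℝ and a constant c > 0 with g ∘ φ = c·f, then deg f = deg g. -/
/-- A bi-Lipschitz homeomorphism of ℝ: a bijection with two-sided Lipschitz bounds. -/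
def BiLipschitz (φ : ℝ → ℝ) : Prop :=
  Function.Bijective φ ∧ ∃ A B : ℝ, 0 < A ∧ 0 < B ∧
    ∀ s t : ℝ, A * |s - t| ≤ |φ s - φ t| ∧ |φ s - φ t| ≤ B * |s - t|

open Filter Asymptotics Polynomial

lemma poly_bound_atTop (r : Polynomial ℝ) :
    ∃ R : ℝ, 1 ≤ R ∧ ∀ x : ℝ, R ≤ x →
      |r.leadingCoeff| / 2 * x ^ r.natDegree ≤ |r.eval x| ∧
      |r.eval x| ≤ (3 * |r.leadingCoeff| / 2) * x ^ r.natDegree := by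
  have h := r.isEquivalent_atTop_lead
  have h2 := h.isLittleO.def (by norm_num : (0:ℝ) < 1/2)
  have h3 : ∀ᶠ x : ℝ in atTop, 0 ≤ x := eventually_ge_atTop 0
  rcases ((h2.and h3).and (eventually_ge_atTop 1)).exists_forall_of_atTop with ⟨R, hR⟩
  refine ⟨max R 1, le_max_right _ _, fun x hx => ?_⟩
  obtain ⟨⟨hb, hx0⟩, -⟩ := hR x (le_trans (le_max_left _ _) hx)
  simp only [Pi.sub_apply, Real.norm_eq_abs] at hb
  rw [abs_mul, abs_pow, abs_of_nonneg hx0] at hb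
  have h4 := abs_sub_abs_le_abs_sub (r.eval x) (r.leadingCoeff * x ^ r.natDegree)
  have h5 := abs_sub_abs_le_abs_sub (r.leadingCoeff * x ^ r.natDegree) (r.eval x)
  rw [abs_sub_comm] at h5
  rw [abs_mul, abs_pow, abs_of_nonneg hx0] at h4 h5
  constructor <;> linarith

lemma poly_bound (r : Polynomial ℝ) (hr : r ≠ 0) :
    ∃ c1 c2 R : ℝ, 0 < c1 ∧ 0 < c2 ∧ 1 ≤ R ∧ ∀ x : ℝ, R ≤ |x| →
      c1 * |x| ^ r.natDegree ≤ |r.eval x| ∧ |r.eval x| ≤ c2 * |x| ^ r.natDegree := by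
  set s := r.comp (-X) with hsdef
  have hs : ∀ y : ℝ, s.eval y = r.eval (-y) := by intro y; simp [hsdef]
  have hsd : s.natDegree = r.natDegree := by
    simp [hsdef, Polynomial.natDegree_comp]
  have hs0 : s ≠ 0 := by
    intro h0
    apply hr
    have hcomp : s.comp (-X) = r := by
      rw [hsdef, Polynomial.comp_assoc]
      simp
    rw [h0] at hcomp
    simpa using hcomp.symm
  have hlr : (0:ℝ) < |r.leadingCoeff| := abs_pos.mpr (leadingCoeff_ne_zero.mpr hr)
  have hls : (0:ℝ) < |s.leadingCoeff| := abs_pos.mpr (leadingCoeff_ne_zero.mpr hs0)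
  obtain ⟨R1, hR1, H1⟩ := poly_bound_atTop r
  obtain ⟨R2, hR2, H2⟩ := poly_bound_atTop s
  refine ⟨min (|r.leadingCoeff|/2) (|s.leadingCoeff|/2),
    max (3*|r.leadingCoeff|/2) (3*|s.leadingCoeff|/2), max R1 R2,
    by positivity, by positivity, le_trans hR1 (le_max_left _ _), fun x hx => ?_⟩
  have hxd : (0:ℝ) ≤ |x| ^ r.natDegree := pow_nonneg (abs_nonneg x) _
  rcases le_or_gt 0 x with hx0 | hx0
  · rw [abs_of_nonneg hx0] at hx ⊢
    obtain ⟨ha, hb⟩ := H1 x (le_trans (le_max_left _ _) hx)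
    constructor
    · exact le_trans (mul_le_mul_of_nonneg_right (min_le_left _ _) (by positivity)) ha
    · exact le_trans hb (mul_le_mul_of_nonneg_right (le_max_left _ _) (by positivity))
  · rw [abs_of_neg hx0] at hx ⊢
    obtain ⟨ha, hb⟩ := H2 (-x) (le_trans (le_max_right _ _) hx)
    rw [hs, neg_neg, hsd] at ha hb
    have hxn : (0:ℝ) ≤ (-x) ^ r.natDegree := pow_nonneg (by linarith) _
    constructor
    · exact le_trans (mul_le_mul_of_nonneg_right (min_le_right _ _) hxn) ha
    · exact le_trans hb (mul_le_mul_of_nonneg_right (le_max_right _ _) hxn)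

lemma aux_le (n m : ℕ) (K1 K2 T : ℝ) (hK1 : 0 < K1)
    (h : ∀ t : ℝ, T ≤ t → K1 * t ^ m ≤ K2 * t ^ n) : m ≤ n := by
  by_contra hlt
  push_neg at hlt
  set t : ℝ := max (max T 1) (K2 / K1 + 1) with ht
  have ht1 : (1:ℝ) ≤ t := le_trans (le_max_right _ _) (le_max_left _ _)
  have htT : T ≤ t := le_trans (le_max_left _ _) (le_max_left _ _)
  have htK : K2 / K1 + 1 ≤ t := le_max_right _ _
  have h0 : (0:ℝ) < t := lt_of_lt_of_le one_pos ht1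
  have hh := h t htT
  have hpow : t ^ m = t ^ n * t ^ (m - n) := by
    rw [← pow_add]; congr 1; omega
  have h1 : (1:ℝ) ≤ t ^ (m - n) := one_le_pow₀ ht1
  have h2 : t ≤ t ^ (m - n) := by
    calc t = t ^ 1 := (pow_one t).symm
    _ ≤ t ^ (m - n) := pow_le_pow_right₀ ht1 (by omega)
  have htn : (0:ℝ) < t ^ n := pow_pos h0 n
  rw [hpow] at hh
  have : K1 * t ^ (m - n) ≤ K2 := le_of_mul_le_mul_right (by nlinarith) htn
  nlinarith [mul_div_cancel₀ K2 hK1.ne', this, h2, htK, hK1]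


/-- If f, g are nonconstant polynomial functions and g ∘ φ = c·f for some bi-Lipschitz
homeomorphism φ and constant c > 0, then deg f = deg g. -/

theorem stmt1 (p q : Polynomial ℝ) (hp : 0 < p.natDegree) (hq : 0 < q.natDegree)
    (φ : ℝ → ℝ) (hφ : BiLipschitz φ) (c : ℝ) (hc : 0 < c)
    (h : ∀ t : ℝ, q.eval (φ t) = c * p.eval t) :
    p.natDegree = q.natDegree := by
  obtain ⟨-, A, B, hA, hB, hAB⟩ := hφ
  set D := |φ 0| with hDdef
  have hD : 0 ≤ D := abs_nonneg _
  have hp0 : p ≠ 0 := fun h0 => by simp [h0] at hp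
  have hq0 : q ≠ 0 := fun h0 => by simp [h0] at hq
  obtain ⟨c1p, c2p, Rp, hc1p, hc2p, hRp, Hp⟩ := poly_bound p hp0
  obtain ⟨c1q, c2q, Rq, hc1q, hc2q, hRq, Hq⟩ := poly_bound q hq0
  set n := p.natDegree with hn
  set m := q.natDegree with hm
  have hφlb : ∀ t : ℝ, 0 ≤ t → A * t - D ≤ |φ t| := by
    intro t ht
    obtain ⟨h1, -⟩ := hAB t 0
    rw [sub_zero, abs_of_nonneg ht] at h1
    have h2 : |φ t - φ 0| ≤ |φ t| + |φ 0| := by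
      calc |φ t - φ 0| ≤ |φ t - 0| + |0 - φ 0| := abs_sub_le _ _ _
      _ = |φ t| + |φ 0| := by rw [sub_zero, zero_sub, abs_neg]
    linarith
  have hφub : ∀ t : ℝ, 0 ≤ t → |φ t| ≤ B * t + D := by
    intro t ht
    obtain ⟨-, h2⟩ := hAB t 0
    rw [sub_zero, abs_of_nonneg ht] at h2
    have h3 := abs_sub_abs_le_abs_sub (φ t) (φ 0)
    linarith
  set T : ℝ := max (max (max Rp 1) (2 * D / A)) ((Rq + D) / A) with hT
  have key : ∀ t : ℝ, T ≤ t →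
      (c * c1p) * t ^ n ≤ (c2q * (B + D) ^ m) * t ^ m ∧
      (c1q * (A / 2) ^ m) * t ^ m ≤ (c * c2p) * t ^ n := by
    intro t ht
    have ht1 : (1:ℝ) ≤ t :=
      le_trans (le_trans (le_max_right _ _) (le_max_left _ _)) (le_trans (le_max_left _ _) ht)
    have htpos : (0:ℝ) < t := lt_of_lt_of_le one_pos ht1
    have htRp : Rp ≤ t :=
      le_trans (le_trans (le_max_left _ _) (le_max_left _ _)) (le_trans (le_max_left _ _) ht)
    have htD : 2 * D / A ≤ t :=
      le_trans (le_max_right _ _) (le_trans (le_max_left _ _) ht)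
    have htRq : (Rq + D) / A ≤ t := le_trans (le_max_right _ _) ht
    have hAt1 : 2 * D ≤ A * t := by
      rw [div_le_iff₀ hA] at htD; linarith
    have hAt2 : Rq + D ≤ A * t := by
      rw [div_le_iff₀ hA] at htRq; linarith
    have habs : |t| = t := abs_of_pos htpos
    obtain ⟨hpl, hpu⟩ := Hp t (by rw [habs]; exact htRp)
    rw [habs] at hpl hpu
    have hlb := hφlb t htpos.le
    have hub := hφub t htpos.le
    obtain ⟨hql, hqu⟩ := Hq (φ t) (by linarith)
    have heq : |q.eval (φ t)| = c * |p.eval t| := by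
      rw [h t, abs_mul, abs_of_pos hc]
    have hφu2 : |φ t| ≤ (B + D) * t := by nlinarith
    have hφl2 : A / 2 * t ≤ |φ t| := by nlinarith
    have hAt0 : (0:ℝ) ≤ A / 2 * t := by positivity
    constructor
    · calc (c * c1p) * t ^ n = c * (c1p * t ^ n) := by ring
      _ ≤ c * |p.eval t| := mul_le_mul_of_nonneg_left hpl hc.le
      _ = |q.eval (φ t)| := heq.symm
      _ ≤ c2q * |φ t| ^ m := hqu
      _ ≤ c2q * ((B + D) * t) ^ m :=
        mul_le_mul_of_nonneg_left (pow_le_pow_left₀ (abs_nonneg _) hφu2 m) hc2q.le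
      _ = (c2q * (B + D) ^ m) * t ^ m := by rw [mul_pow]; ring
    · calc (c1q * (A / 2) ^ m) * t ^ m = c1q * (A / 2 * t) ^ m := by rw [mul_pow]; ring
      _ ≤ c1q * |φ t| ^ m :=
        mul_le_mul_of_nonneg_left (pow_le_pow_left₀ hAt0 hφl2 m) hc1q.le
      _ ≤ |q.eval (φ t)| := hql
      _ = c * |p.eval t| := heq
      _ ≤ c * (c2p * t ^ n) := mul_le_mul_of_nonneg_left hpu hc.le
      _ = (c * c2p) * t ^ n := by ring
  have h1 : n ≤ m :=
    aux_le m n (c * c1p) (c2q * (B + D) ^ m) T (by positivity) fun t ht => (key t ht).1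
  have h2 : m ≤ n :=
    aux_le n m (c1q * (A / 2) ^ m) (c * c2p) T (by positivity) fun t ht => (key t ht).2
  exact le_antisymm h1 h2
end

section
/- Let f, g : ℝ → ℝ be polynomial functions of the same degree d ≥ 1, and φ : ℝ → ℝ a bijection with g ∘ φ = c·f for some constant c > 0. If φ is bi-Lipschitz, then for every t ∈ ℝ the multiplicity of f at t equals the multiplicity of g at φ(t). -/
open Polynomial Filter Topology

/-- The multiplicity of a polynomial function at a point: the smallest k ≥ 1 such
that the k-th derivative does not vanish there. -/
noncomputable def polyMult (p : Polynomial ℝ) (t : ℝ) : ℕ :=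
  sInf {k : ℕ | 1 ≤ k ∧ (Polynomial.derivative^[k] p).eval t ≠ 0}

lemma iterate_deriv_sub_C (p : Polynomial ℝ) (a : ℝ) {k : ℕ} (hk : 1 ≤ k) :
    Polynomial.derivative^[k] (p - Polynomial.C a) = Polynomial.derivative^[k] p := by
  obtain ⟨k, rfl⟩ := Nat.exists_eq_add_of_le hk
  rw [add_comm, Function.iterate_succ_apply, Function.iterate_succ_apply]
  congr 1
  simp

lemma polyMult_eq_rootMult (p : Polynomial ℝ) (t : ℝ) (hp : 1 ≤ p.natDegree) :
    polyMult p t = (p - Polynomial.C (p.eval t)).rootMultiplicity t := by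
  set p0 := p - Polynomial.C (p.eval t) with hp0
  have h0 : p0 ≠ 0 := by
    intro h
    rw [h] at hp0
    have := natDegree_sub_C (p := p) (a := p.eval t)
    rw [← hp0] at this
    simp at this
    omega
  set m := p0.rootMultiplicity t with hm
  have hm1 : 1 ≤ m := by
    have : p0.IsRoot t := by simp [hp0, IsRoot]
    have := (rootMultiplicity_pos h0).2 this
    omega
  have hmem : m ∈ {k : ℕ | 1 ≤ k ∧ (Polynomial.derivative^[k] p).eval t ≠ 0} := by
    refine ⟨hm1, ?_⟩
    rw [← iterate_deriv_sub_C p (p.eval t) hm1, ← hp0]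
    rw [Polynomial.eval_iterate_derivative_rootMultiplicity]
    have h1 : ((m.factorial : ℝ)) ≠ 0 := by
      exact_mod_cast Nat.factorial_ne_zero m
    have h2 := Polynomial.eval_divByMonic_pow_rootMultiplicity_ne_zero (p := p0) t h0
    simp only [nsmul_eq_mul]
    exact mul_ne_zero h1 h2
  refine le_antisymm (Nat.sInf_le hmem) ?_
  refine le_csInf ⟨m, hmem⟩ ?_
  rintro k ⟨hk1, hk⟩
  by_contra hlt
  push_neg at hlt
  have := Polynomial.isRoot_iterate_derivative_of_lt_rootMultiplicity (p := p0) (t := t)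
    (n := k) (by omega)
  rw [IsRoot, iterate_deriv_sub_C p (p.eval t) hk1] at this
  exact hk this

lemma tendsto_phi {φ : ℝ → ℝ} {t B : ℝ}
    (hφB : ∀ s, |φ s - φ t| ≤ B * |s - t|) :
    Filter.Tendsto φ (𝓝 t) (𝓝 (φ t)) := by
  rw [Metric.tendsto_nhds_nhds]
  intro ε hε
  rcases le_or_gt B 0 with hB | hB
  · refine ⟨1, one_pos, fun s hs => ?_⟩
    have := hφB s
    have h2 : B * |s - t| ≤ 0 := mul_nonpos_of_nonpos_of_nonneg hB (abs_nonneg _)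
    have : |φ s - φ t| ≤ 0 := this.trans h2
    simp [Real.dist_eq]
    calc |φ s - φ t| ≤ 0 := this
      _ < ε := hε
  · refine ⟨ε / B, by positivity, fun s hs => ?_⟩
    simp only [Real.dist_eq] at *
    calc |φ s - φ t| ≤ B * |s - t| := hφB s
      _ < B * (ε / B) := by
          apply mul_lt_mul_of_pos_left hs hB
      _ = ε := by field_simp

lemma no_lt {t c : ℝ} {φ : ℝ → ℝ} (hc : 0 < c) {B : ℝ} (hB : 0 < B)
    (hφB : ∀ s, |φ s - φ t| ≤ B * |s - t|)
    {m n : ℕ} {r u : Polynomial ℝ} (hr : r.eval t ≠ 0)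
    (heq : ∀ s, c * ((s - t) ^ m * r.eval s) = (φ s - φ t) ^ n * u.eval (φ s))
    (hmn : m < n) : False := by
  have key : ∀ s, s ≠ t →
      c * |r.eval s| ≤ B ^ n * |s - t| ^ (n - m) * |u.eval (φ s)| := by
    intro s hs
    have habs : c * (|s - t| ^ m * |r.eval s|) = |φ s - φ t| ^ n * |u.eval (φ s)| := by
      have := heq s
      have h1 : |c * ((s - t) ^ m * r.eval s)| = |(φ s - φ t) ^ n * u.eval (φ s)| := by
        rw [this]
      rwa [abs_mul, abs_mul, abs_mul, abs_pow, abs_pow, abs_of_pos hc] at h1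
    have hle : |φ s - φ t| ^ n ≤ (B * |s - t|) ^ n :=
      pow_le_pow_left₀ (abs_nonneg _) (hφB s) n
    have hst : 0 < |s - t| := abs_pos.2 (sub_ne_zero.2 hs)
    have h2 : c * (|s - t| ^ m * |r.eval s|) ≤ (B * |s - t|) ^ n * |u.eval (φ s)| := by
      rw [habs]
      exact mul_le_mul_of_nonneg_right hle (abs_nonneg _)
    have h3 : (B * |s - t|) ^ n = B ^ n * (|s - t| ^ m * |s - t| ^ (n - m)) := by
      rw [mul_pow, ← pow_add]
      congr 2
      omega
    rw [h3] at h2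
    have h4 : c * |r.eval s| * |s - t| ^ m ≤
        B ^ n * |s - t| ^ (n - m) * |u.eval (φ s)| * |s - t| ^ m := by
      ring_nf
      ring_nf at h2
      linarith
    exact le_of_mul_le_mul_right h4 (by positivity)
  have hφt : Filter.Tendsto φ (𝓝[≠] t) (𝓝 (φ t)) :=
    (tendsto_phi hφB).mono_left nhdsWithin_le_nhds
  have hLHS : Filter.Tendsto (fun s => c * |r.eval s|) (𝓝[≠] t) (𝓝 (c * |r.eval t|)) := by
    apply Filter.Tendsto.mono_left _ nhdsWithin_le_nhds
    exact (tendsto_const_nhds.mul ((r.continuous_aeval.tendsto t).abs))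
  have hRHS : Filter.Tendsto (fun s => B ^ n * |s - t| ^ (n - m) * |u.eval (φ s)|)
      (𝓝[≠] t) (𝓝 0) := by
    have h1 : Filter.Tendsto (fun s : ℝ => |s - t| ^ (n - m)) (𝓝[≠] t) (𝓝 0) := by
      have : Filter.Tendsto (fun s : ℝ => |s - t|) (𝓝 t) (𝓝 0) := by
        have hco : Continuous (fun s : ℝ => |s - t|) :=
          (continuous_id.sub continuous_const).abs
        have := hco.tendsto t
        simpa using this
      have h2 := this.pow (n - m)
      rw [zero_pow (by omega : n - m ≠ 0)] at h2
      exact h2.mono_left nhdsWithin_le_nhds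
    have h2 : Filter.Tendsto (fun s => |u.eval (φ s)|) (𝓝[≠] t) (𝓝 |u.eval (φ t)|) :=
      ((u.continuous_aeval.tendsto (φ t)).abs).comp hφt
    have := (tendsto_const_nhds (x := B ^ n)).mul h1 |>.mul h2
    simpa using this
  have hle : c * |r.eval t| ≤ 0 :=
    le_of_tendsto_of_tendsto hLHS hRHS
      (eventually_mem_nhdsWithin.mono fun s hs => key s hs)
  have : 0 < c * |r.eval t| := mul_pos hc (abs_pos.2 hr)
  linarith

lemma no_gt {t c : ℝ} {φ : ℝ → ℝ} (hc : 0 < c) {A B : ℝ} (hA : 0 < A) (hB : 0 < B)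
    (hφA : ∀ s, A * |s - t| ≤ |φ s - φ t|)
    (hφB : ∀ s, |φ s - φ t| ≤ B * |s - t|)
    {m n : ℕ} {u r : Polynomial ℝ} (hu : u.eval (φ t) ≠ 0)
    (heq : ∀ s, c * ((s - t) ^ m * r.eval s) = (φ s - φ t) ^ n * u.eval (φ s))
    (hnm : n < m) : False := by
  have key : ∀ s, s ≠ t →
      A ^ n * |u.eval (φ s)| ≤ c * |s - t| ^ (m - n) * |r.eval s| := by
    intro s hs
    have habs : c * (|s - t| ^ m * |r.eval s|) = |φ s - φ t| ^ n * |u.eval (φ s)| := by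
      have := heq s
      have h1 : |c * ((s - t) ^ m * r.eval s)| = |(φ s - φ t) ^ n * u.eval (φ s)| := by
        rw [this]
      rwa [abs_mul, abs_mul, abs_mul, abs_pow, abs_pow, abs_of_pos hc] at h1
    have hst : 0 < |s - t| := abs_pos.2 (sub_ne_zero.2 hs)
    have hle : (A * |s - t|) ^ n ≤ |φ s - φ t| ^ n :=
      pow_le_pow_left₀ (by positivity) (hφA s) n
    have h2 : (A * |s - t|) ^ n * |u.eval (φ s)| ≤ c * (|s - t| ^ m * |r.eval s|) := by
      rw [habs]
      exact mul_le_mul_of_nonneg_right hle (abs_nonneg _)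
    have h3 : |s - t| ^ m = |s - t| ^ n * |s - t| ^ (m - n) := by
      rw [← pow_add]; congr 1; omega
    rw [h3, mul_pow] at h2
    have h4 : A ^ n * |u.eval (φ s)| * |s - t| ^ n ≤
        c * |s - t| ^ (m - n) * |r.eval s| * |s - t| ^ n := by
      ring_nf; ring_nf at h2; linarith
    exact le_of_mul_le_mul_right h4 (by positivity)
  have hφt : Filter.Tendsto φ (𝓝[≠] t) (𝓝 (φ t)) :=
    (tendsto_phi hφB).mono_left nhdsWithin_le_nhds
  have hLHS : Filter.Tendsto (fun s => A ^ n * |u.eval (φ s)|) (𝓝[≠] t)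
      (𝓝 (A ^ n * |u.eval (φ t)|)) :=
    tendsto_const_nhds.mul (((u.continuous_aeval.tendsto (φ t)).abs).comp hφt)
  have hRHS : Filter.Tendsto (fun s => c * |s - t| ^ (m - n) * |r.eval s|)
      (𝓝[≠] t) (𝓝 0) := by
    have h1 : Filter.Tendsto (fun s : ℝ => |s - t| ^ (m - n)) (𝓝 t) (𝓝 0) := by
      have : Filter.Tendsto (fun s : ℝ => |s - t|) (𝓝 t) (𝓝 0) := by
        have hco : Continuous (fun s : ℝ => |s - t|) :=
          (continuous_id.sub continuous_const).abs
        have := hco.tendsto t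
        simpa using this
      have h2 := this.pow (m - n)
      rwa [zero_pow (by omega : m - n ≠ 0)] at h2
    have := ((tendsto_const_nhds (x := c)).mul h1).mul ((r.continuous_aeval.tendsto t).abs)
    simp only [mul_zero, zero_mul] at this
    exact this.mono_left nhdsWithin_le_nhds
  have hle : A ^ n * |u.eval (φ t)| ≤ 0 :=
    le_of_tendsto_of_tendsto hLHS hRHS
      (eventually_mem_nhdsWithin.mono fun s hs => key s hs)
  have : 0 < A ^ n * |u.eval (φ t)| := by positivity
  linarith

/-- If f, g are polynomial functions of the same degree d ≥ 1, φ is a bijection with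
g ∘ φ = c·f (c > 0), and φ is bi-Lipschitz, then the multiplicity of f at t equals
the multiplicity of g at φ(t) for every t. -/
theorem stmt2 (d : ℕ) (hd : 1 ≤ d) (p q : Polynomial ℝ)
    (hpd : p.natDegree = d) (hqd : q.natDegree = d)
    (φ : ℝ → ℝ) (hbij : Function.Bijective φ) (c : ℝ) (hc : 0 < c)
    (h : ∀ t : ℝ, q.eval (φ t) = c * p.eval t)
    (hφ : BiLipschitz φ) :
    ∀ t : ℝ, polyMult p t = polyMult q (φ t) := by
  obtain ⟨-, A, B, hA, hB, hAB⟩ := hφ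
  intro t
  rw [polyMult_eq_rootMult p t (by omega), polyMult_eq_rootMult q (φ t) (by omega)]
  set p0 := p - Polynomial.C (p.eval t) with hp0
  set q0 := q - Polynomial.C (q.eval (φ t)) with hq0
  have hp0ne : p0 ≠ 0 := by
    intro hcon
    have := natDegree_sub_C (p := p) (a := p.eval t)
    rw [← hp0, hcon] at this
    simp at this
    omega
  have hq0ne : q0 ≠ 0 := by
    intro hcon
    have := natDegree_sub_C (p := q) (a := q.eval (φ t))
    rw [← hq0, hcon] at this
    simp at this
    omega
  set m := p0.rootMultiplicity t with hm
  set n := q0.rootMultiplicity (φ t) with hn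
  obtain ⟨r, hrfac, hrndvd⟩ := p0.exists_eq_pow_rootMultiplicity_mul_and_not_dvd hp0ne t
  obtain ⟨u, hufac, hundvd⟩ := q0.exists_eq_pow_rootMultiplicity_mul_and_not_dvd hq0ne (φ t)
  have hr : r.eval t ≠ 0 := fun hcon => hrndvd (dvd_iff_isRoot.2 hcon)
  have hu : u.eval (φ t) ≠ 0 := fun hcon => hundvd (dvd_iff_isRoot.2 hcon)
  have heq : ∀ s, c * ((s - t) ^ m * r.eval s) = (φ s - φ t) ^ n * u.eval (φ s) := by
    intro s
    have h1 : q0.eval (φ s) = c * p0.eval s := by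
      simp only [hp0, hq0, eval_sub, eval_C, h s, h t]
      ring
    have h2 : p0.eval s = (s - t) ^ m * r.eval s := by
      conv_lhs => rw [hrfac]
      simp [← hm]
    have h3 : q0.eval (φ s) = (φ s - φ t) ^ n * u.eval (φ s) := by
      conv_lhs => rw [hufac]
      simp [← hn]
    rw [← h3, h1, h2]
  rcases lt_trichotomy m n with hlt | heqmn | hgt
  · exact absurd (no_lt hc hB (fun s => (hAB s t).2) hr heq hlt) (by simp)
  · exact heqmn
  · exact absurd (no_gt hc hA hB (fun s => (hAB s t).1) (fun s => (hAB s t).2) hu heq hgt)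
      (by simp)
end

section
/- Let f, g : ℝ → ℝ be polynomial functions of the same degree d ≥ 1, and φ : ℝ → ℝ a bijection with g ∘ φ = c·f for some constant c > 0. If φ is an analytic diffeomorphism (φ and φ⁻¹ analytic), then φ is bi-Lipschitz. -/
open Filter Asymptotics Polynomial Set Topology


lemma aux_comp_equiv (q : Polynomial ℝ) (φ : ℝ → ℝ) (htop : Tendsto φ atTop atTop) :
    (fun t => q.eval (φ t)) ~[atTop] fun t => q.leadingCoeff * φ t ^ q.natDegree := by
  have h := q.isEquivalent_atTop_lead
  exact (IsLittleO.comp_tendsto h htop : _)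

lemma aux_deriv_natDegree (p : Polynomial ℝ) (d : ℕ) (hd : 1 ≤ d) (hpd : p.natDegree = d) :
    p.derivative.natDegree = d - 1 ∧ p.derivative.leadingCoeff = (d : ℝ) * p.leadingCoeff := by
  have hp0 : p ≠ 0 := fun h0 => by simp [h0] at hpd; omega
  have hlc : p.leadingCoeff ≠ 0 := Polynomial.leadingCoeff_ne_zero.mpr hp0
  have hco : p.derivative.coeff (d - 1) = (d : ℝ) * p.leadingCoeff := by
    rw [Polynomial.coeff_derivative]
    have h1 : d - 1 + 1 = d := by omega
    rw [h1, ← hpd, Polynomial.coeff_natDegree, hpd]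
    have h2 : ((d - 1 : ℕ) : ℝ) = (d : ℝ) - 1 := by
      have := Nat.cast_sub hd (R := ℝ); simpa using this
    rw [h2]; ring
  have hne : p.derivative.coeff (d - 1) ≠ 0 := by
    rw [hco]
    exact mul_ne_zero (Nat.cast_ne_zero.mpr (by omega)) hlc
  have hdeg : p.derivative.natDegree = d - 1 :=
    le_antisymm (by simpa [hpd] using Polynomial.natDegree_derivative_le p)
      (Polynomial.le_natDegree_of_ne_zero hne)
  exact ⟨hdeg, by rw [Polynomial.leadingCoeff, hdeg, hco]⟩

lemma aux_chain (p q : Polynomial ℝ) (φ : ℝ → ℝ) (hφ : Differentiable ℝ φ) (c : ℝ)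
    (h : ∀ t : ℝ, q.eval (φ t) = c * p.eval t) (t : ℝ) :
    q.derivative.eval (φ t) * deriv φ t = c * p.derivative.eval t := by
  have h1 : HasDerivAt (fun x => q.eval (φ x)) (q.derivative.eval (φ t) * deriv φ t) t :=
    (q.hasDerivAt (φ t)).comp t (hφ t).hasDerivAt
  have h2 : HasDerivAt (fun x => q.eval (φ x)) (c * p.derivative.eval t) t := by
    have h3 : HasDerivAt (fun x => c * p.eval x) (c * p.derivative.eval t) t :=
      (p.hasDerivAt t).const_mul c
    exact h3.congr_of_eventuallyEq (Eventually.of_forall fun x => h x)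
  exact h1.unique h2

lemma aux_isEquiv_pow {α : Type*} {l : Filter α} {u v : α → ℝ} (h : u ~[l] v) (n : ℕ) :
    (fun x => u x ^ n) ~[l] fun x => v x ^ n := by
  induction n with
  | zero => simpa using IsEquivalent.refl
  | succ k ih =>
    have := ih.mul h
    refine (this.congr_left ?_).congr_right ?_ <;>
      exact Eventually.of_forall fun x => by simp [Pi.mul_apply, pow_succ]

lemma lemM (d : ℕ) (hd : 1 ≤ d) (p q : Polynomial ℝ)
    (hpd : p.natDegree = d) (hqd : q.natDegree = d)
    (φ : ℝ → ℝ) (hφ : Differentiable ℝ φ) (c : ℝ) (hc : 0 < c)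
    (h : ∀ t : ℝ, q.eval (φ t) = c * p.eval t)
    (htop : Tendsto φ atTop atTop) :
    ∃ L : ℝ, 0 < L ∧ Tendsto (deriv φ) atTop (𝓝 L) := by
  have hp0 : p ≠ 0 := fun h0 => by simp [h0] at hpd; omega
  have hq0 : q ≠ 0 := fun h0 => by simp [h0] at hqd; omega
  set lp := p.leadingCoeff with hlp
  set lq := q.leadingCoeff with hlq
  have hlp0 : lp ≠ 0 := Polynomial.leadingCoeff_ne_zero.mpr hp0
  have hlq0 : lq ≠ 0 := Polynomial.leadingCoeff_ne_zero.mpr hq0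
  -- step 1: φ t ^ d ~ K t^d
  have E1 : (fun t => q.eval (φ t)) ~[atTop] fun t => lq * φ t ^ d := by
    have := aux_comp_equiv q φ htop
    rwa [hqd] at this
  have E2 : (fun t : ℝ => c * p.eval t) ~[atTop] fun t => (c * lp) * t ^ d := by
    have h1 : (fun t : ℝ => p.eval t) ~[atTop] fun t => lp * t ^ d := by
      have := p.isEquivalent_atTop_lead; rwa [hpd] at this
    have h2 := (IsEquivalent.refl (u := fun _ : ℝ => c) (l := atTop)).mul h1
    refine h2.congr_right (Eventually.of_forall fun t => by simp only [Pi.mul_apply]; ring)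
  have E3 : (fun t => lq * φ t ^ d) ~[atTop] fun t => (c * lp) * t ^ d := by
    exact (E1.symm.congr_right (Eventually.of_forall fun t => h t)).trans E2
  set K := c * lp / lq with hK
  have hK0 : K ≠ 0 := by
    simp only [hK]
    exact div_ne_zero (mul_ne_zero hc.ne' hlp0) hlq0
  have E4 : (fun t => φ t ^ d) ~[atTop] fun t => K * t ^ d := by
    have h2 := (IsEquivalent.refl (u := fun _ : ℝ => lq⁻¹) (l := atTop)).mul E3
    have ha : (fun t => (fun _ : ℝ => lq⁻¹) t * (lq * φ t ^ d)) =ᶠ[atTop] fun t => φ t ^ d :=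
      Eventually.of_forall fun t => by field_simp
    have hb : (fun t => (fun _ : ℝ => lq⁻¹) t * ((c * lp) * t ^ d)) =ᶠ[atTop]
        fun t => K * t ^ d := Eventually.of_forall fun t => by rw [hK]; field_simp; try ring
    calc (fun t => φ t ^ d) =ᶠ[atTop] _ := ha.symm
      _ ~[atTop] _ := h2
      _ =ᶠ[atTop] _ := hb
  have hdiv : Tendsto (fun t => φ t ^ d / t ^ d) atTop (𝓝 K) := by
    have h5 : (fun t => φ t ^ d / t ^ d) ~[atTop] fun t : ℝ => K := by
      have h6 := E4.div (IsEquivalent.refl (u := fun t : ℝ => t ^ d) (l := atTop))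
      refine h6.congr_right ?_
      filter_upwards [eventually_gt_atTop 0] with t ht
      simp only [Pi.div_apply]
      rw [mul_div_assoc, div_self (by positivity), mul_one]
    exact (isEquivalent_const_iff_tendsto hK0).mp h5
  have hKpos : 0 < K := by
    rcases hK0.lt_or_gt with h' | h'
    · exfalso
      have hev : ∀ᶠ t : ℝ in atTop, 0 ≤ φ t ^ d / t ^ d := by
        filter_upwards [eventually_gt_atTop 0, htop.eventually (eventually_gt_atTop 0)]
          with t ht hφt
        positivity
      exact absurd (ge_of_tendsto hdiv hev) (not_le.mpr h')
    · exact h'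
  -- step 2: φ t / t → L := K^(1/d)
  set L := K ^ ((d : ℝ)⁻¹) with hLdef
  have hL : 0 < L := Real.rpow_pos_of_pos hKpos _
  have hφdiv : Tendsto (fun t => φ t / t) atTop (𝓝 L) := by
    have hcont : ContinuousAt (fun y : ℝ => y ^ ((d : ℝ)⁻¹)) K :=
      Real.continuousAt_rpow_const K _ (Or.inl hK0)
    have h7 : Tendsto (fun t => (φ t ^ d / t ^ d) ^ ((d : ℝ)⁻¹)) atTop (𝓝 L) :=
      hcont.tendsto.comp hdiv
    refine h7.congr' ?_
    filter_upwards [eventually_gt_atTop 0, htop.eventually (eventually_gt_atTop 0)]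
      with t ht hφt
    rw [← div_pow, Real.pow_rpow_inv_natCast (by positivity) (by omega)]
  have hEφ : φ ~[atTop] fun t => L * t := by
    rw [isEquivalent_iff_tendsto_one ?hz]
    case hz => filter_upwards [eventually_gt_atTop 0] with t ht; positivity
    have h8 : Tendsto (fun t => (φ t / t) / L) atTop (𝓝 (L / L)) := hφdiv.div_const L
    rw [div_self hL.ne'] at h8
    refine h8.congr (fun t => ?_)
    simp only [Pi.div_apply]
    rw [div_div, mul_comm t L]
  -- step 3: derivative asymptotics
  obtain ⟨hpd', hplc'⟩ := aux_deriv_natDegree p d hd hpd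
  obtain ⟨hqd', hqlc'⟩ := aux_deriv_natDegree q d hd hqd
  set e := d - 1 with he
  have hq'0 : q.derivative ≠ 0 := by
    intro h0
    rw [h0] at hqlc'
    simp only [Polynomial.leadingCoeff_zero] at hqlc'
    exact (mul_ne_zero (Nat.cast_ne_zero.mpr (by omega : d ≠ 0)) hlq0) hqlc'.symm
  have hkey : ∀ t, q.derivative.eval (φ t) * deriv φ t = c * p.derivative.eval t :=
    aux_chain p q φ hφ c h
  have hev_ne : ∀ᶠ t in atTop, q.derivative.eval (φ t) ≠ 0 := by
    have := htop.eventually (Polynomial.eventually_no_roots q.derivative hq'0)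
    filter_upwards [this] with t ht
    exact ht
  have hderiv_eq : (deriv φ) =ᶠ[atTop]
      fun t => c * p.derivative.eval t / q.derivative.eval (φ t) := by
    filter_upwards [hev_ne] with t ht
    rw [eq_div_iff ht, mul_comm]
    exact hkey t
  -- equivalences for numerator and denominator
  have EN : (fun t : ℝ => c * p.derivative.eval t) ~[atTop]
      fun t => (c * ((d : ℝ) * lp)) * t ^ e := by
    have h1 : (fun t : ℝ => p.derivative.eval t) ~[atTop]
        fun t => ((d : ℝ) * lp) * t ^ e := by
      have := p.derivative.isEquivalent_atTop_lead
      rwa [hpd', hplc'] at this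
    have h2 := (IsEquivalent.refl (u := fun _ : ℝ => c) (l := atTop)).mul h1
    refine h2.congr_right (Eventually.of_forall fun t => by simp only [Pi.mul_apply]; ring)
  have ED : (fun t => q.derivative.eval (φ t)) ~[atTop]
      fun t => ((d : ℝ) * lq * L ^ e) * t ^ e := by
    have h1 : (fun t => q.derivative.eval (φ t)) ~[atTop]
        fun t => ((d : ℝ) * lq) * φ t ^ e := by
      have := aux_comp_equiv q.derivative φ htop
      rwa [hqd', hqlc'] at this
    refine h1.trans ?_
    have h2 : (fun t => φ t ^ e) ~[atTop] fun t => (L * t) ^ e := aux_isEquiv_pow hEφ e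
    have h3 := (IsEquivalent.refl (u := fun _ : ℝ => (d : ℝ) * lq) (l := atTop)).mul h2
    calc (fun t => ((d : ℝ) * lq) * φ t ^ e)
        ~[atTop] _ := h3
      _ =ᶠ[atTop] _ := Eventually.of_forall fun t => by simp only [Pi.mul_apply]; ring
  set L' := (c * ((d : ℝ) * lp)) / ((d : ℝ) * lq * L ^ e) with hL'def
  have hL'pos : 0 < L' := by
    have hLe : (0:ℝ) < L ^ e := pow_pos hL e
    have hd0 : ((d : ℝ)) ≠ 0 := Nat.cast_ne_zero.mpr (by omega)
    have hrw : L' = K / L ^ e := by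
      rw [hL'def, hK]
      field_simp
    rw [hrw]
    exact div_pos hKpos hLe
  have hfinal : Tendsto (deriv φ) atTop (𝓝 L') := by
    have h9 := EN.div ED
    have h10 : (fun t : ℝ => ((c * ((d : ℝ) * lp)) * t ^ e) /
        (((d : ℝ) * lq * L ^ e) * t ^ e)) =ᶠ[atTop] fun _ : ℝ => L' := by
      filter_upwards [eventually_gt_atTop 0] with t ht
      rw [hL'def]
      rw [mul_div_mul_right _ _ (by positivity : t ^ e ≠ 0)]
    have h11 : (fun t => c * p.derivative.eval t / q.derivative.eval (φ t)) ~[atTop]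
        fun _ : ℝ => L' := h9.trans_eventuallyEq h10
    have h12 : Tendsto (fun t => c * p.derivative.eval t / q.derivative.eval (φ t))
        atTop (𝓝 L') := (isEquivalent_const_iff_tendsto hL'pos.ne').mp h11
    exact h12.congr' hderiv_eq.symm
  exact ⟨L', hL'pos, hfinal⟩


lemma aux_bounds (F : ℝ → ℝ) (hF : Continuous F) (hFpos : ∀ t, 0 < F t)
    (L1 L2 : ℝ) (hL1 : 0 < L1) (hL2 : 0 < L2)
    (htop : Tendsto F atTop (𝓝 L1)) (hbot : Tendsto F atBot (𝓝 L2)) :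
    ∃ A B : ℝ, 0 < A ∧ ∀ t, A ≤ F t ∧ F t ≤ B := by
  have e1 : ∀ᶠ t in atTop, F t ∈ Icc (L1 / 2) (2 * L1) :=
    htop (Icc_mem_nhds (by linarith) (by linarith))
  have e2 : ∀ᶠ t in atBot, F t ∈ Icc (L2 / 2) (2 * L2) :=
    hbot (Icc_mem_nhds (by linarith) (by linarith))
  rw [eventually_atTop] at e1
  rw [eventually_atBot] at e2
  obtain ⟨M1, hM1⟩ := e1
  obtain ⟨M2, hM2⟩ := e2
  set a := min M2 (-1) with ha
  set b := max M1 1 with hb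
  have hab : a ≤ b := le_trans (min_le_right _ _) (le_trans (by norm_num) (le_max_right M1 1))
  obtain ⟨x0, hx0mem, hx0⟩ := isCompact_Icc.exists_isMinOn (nonempty_Icc.mpr hab)
    hF.continuousOn
  obtain ⟨x1, hx1mem, hx1⟩ := isCompact_Icc.exists_isMaxOn (nonempty_Icc.mpr hab)
    hF.continuousOn
  refine ⟨min (min (L1 / 2) (L2 / 2)) (F x0), max (max (2 * L1) (2 * L2)) (F x1),
    lt_min (lt_min (by linarith) (by linarith)) (hFpos x0), fun t => ?_⟩
  rcases le_total t a with h1 | h1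
  · have := hM2 t (le_trans h1 (min_le_left _ _))
    constructor
    · exact le_trans (le_trans (min_le_left _ _) (min_le_right _ _)) this.1
    · exact le_trans this.2 (le_trans (le_max_right _ _) (le_max_left _ _))
  rcases le_total b t with h2 | h2
  · have := hM1 t (le_trans (le_max_left _ _) h2)
    constructor
    · exact le_trans (le_trans (min_le_left _ _) (min_le_left _ _)) this.1
    · exact le_trans this.2 (le_trans (le_max_left _ _) (le_max_left _ _))
  · have hmem : t ∈ Icc a b := ⟨h1, h2⟩
    exact ⟨le_trans (min_le_right _ _) (hx0 hmem), le_trans (hx1 hmem) (le_max_right _ _)⟩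

/-- If f, g are polynomial functions of the same degree d ≥ 1, φ is a bijection with
g ∘ φ = c·f (c > 0), and φ is an analytic diffeomorphism (φ and φ⁻¹ analytic),
then φ is bi-Lipschitz. -/
theorem stmt4 (d : ℕ) (hd : 1 ≤ d) (p q : Polynomial ℝ)
    (hpd : p.natDegree = d) (hqd : q.natDegree = d)
    (φ : ℝ → ℝ) (hbij : Function.Bijective φ) (c : ℝ) (hc : 0 < c)
    (h : ∀ t : ℝ, q.eval (φ t) = c * p.eval t)
    (hφ : ∀ x : ℝ, AnalyticAt ℝ φ x)
    (ψ : ℝ → ℝ) (hlinv : Function.LeftInverse ψ φ) (hrinv : Function.RightInverse ψ φ)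
    (hψ : ∀ x : ℝ, AnalyticAt ℝ ψ x) :
    ∃ A B : ℝ, 0 < A ∧ 0 < B ∧
      ∀ s t : ℝ, A * |s - t| ≤ |φ s - φ t| ∧ |φ s - φ t| ≤ B * |s - t| := by
  have hdφ : Differentiable ℝ φ := fun x => (hφ x).differentiableAt
  have hdψ : Differentiable ℝ ψ := fun x => (hψ x).differentiableAt
  have hAn : AnalyticOnNhd ℝ φ univ := fun x _ => hφ x
  have hderivAn : AnalyticOnNhd ℝ (deriv φ) univ := hAn.deriv
  have hcont : Continuous (deriv φ) := by
    rw [continuous_iff_continuousAt]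
    exact fun x => ((hderivAn x (mem_univ x)).differentiableAt).continuousAt
  have hinv1 : ∀ t, deriv ψ (φ t) * deriv φ t = 1 := by
    intro t
    have h1 : HasDerivAt (fun x => ψ (φ x)) (deriv ψ (φ t) * deriv φ t) t :=
      ((hdψ (φ t)).hasDerivAt).comp t (hdφ t).hasDerivAt
    have h2 : HasDerivAt (fun x => ψ (φ x)) 1 t := by
      have heq : (fun x => ψ (φ x)) = fun x => x := funext hlinv
      rw [heq]; exact hasDerivAt_id t
    exact h1.unique h2
  have hinv2 : ∀ u, deriv φ (ψ u) * deriv ψ u = 1 := by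
    intro u
    have h1 : HasDerivAt (fun x => φ (ψ x)) (deriv φ (ψ u) * deriv ψ u) u :=
      ((hdφ (ψ u)).hasDerivAt).comp u (hdψ u).hasDerivAt
    have h2 : HasDerivAt (fun x => φ (ψ x)) 1 u := by
      have heq : (fun x => φ (ψ x)) = fun x => x := funext hrinv
      rw [heq]; exact hasDerivAt_id u
    exact h1.unique h2
  have hφne : ∀ t, deriv φ t ≠ 0 := by
    intro t hzero
    have := hinv1 t
    rw [hzero, mul_zero] at this
    exact one_ne_zero this.symm
  -- polynomial reflections
  have hpneg_deg : (p.comp (-X : Polynomial ℝ)).natDegree = d := by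
    rw [Polynomial.natDegree_comp, Polynomial.natDegree_neg, Polynomial.natDegree_X,
      mul_one, hpd]
  have hqneg_deg : (q.comp (-X : Polynomial ℝ)).natDegree = d := by
    rw [Polynomial.natDegree_comp, Polynomial.natDegree_neg, Polynomial.natDegree_X,
      mul_one, hqd]
  have hpneg_eval : ∀ (r : Polynomial ℝ) (t : ℝ), (r.comp (-X : Polynomial ℝ)).eval t
      = r.eval (-t) := by
    intro r t; simp [Polynomial.eval_comp]
  -- limits of |deriv φ| at ±∞
  have hlimits : (∃ L1, 0 < L1 ∧ Tendsto (fun t => |deriv φ t|) atTop (𝓝 L1)) ∧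
      (∃ L2, 0 < L2 ∧ Tendsto (fun t => |deriv φ t|) atBot (𝓝 L2)) := by
    rcases (hdφ.continuous.strictMono_of_inj hbij.1) with hm | hm
    · have htopφ : Tendsto φ atTop atTop :=
        hm.monotone.tendsto_atTop_atTop (fun b => ⟨ψ b, (hrinv b).ge⟩)
      have hbotφ : Tendsto φ atBot atBot :=
        hm.monotone.tendsto_atBot_atBot (fun b => ⟨ψ b, (hrinv b).le⟩)
      constructor
      · obtain ⟨L, hL, hT⟩ := lemM d hd p q hpd hqd φ hdφ c hc h htopφ
        exact ⟨L, hL, by simpa [abs_of_pos hL] using hT.abs⟩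
      · set φ₂ : ℝ → ℝ := fun t => -φ (-t) with hφ₂def
        have hdφ₂ : Differentiable ℝ φ₂ := (hdφ.comp differentiable_id.neg).neg
        have heq2 : ∀ t : ℝ, (q.comp (-X : Polynomial ℝ)).eval (φ₂ t)
            = c * (p.comp (-X : Polynomial ℝ)).eval t := by
          intro t
          rw [hpneg_eval q, hpneg_eval p, hφ₂def]
          simp only [neg_neg]
          exact h (-t)
        have htopφ₂ : Tendsto φ₂ atTop atTop :=
          tendsto_neg_atBot_atTop.comp (hbotφ.comp tendsto_neg_atTop_atBot)
        obtain ⟨L, hL, hT⟩ := lemM d hd (p.comp (-X)) (q.comp (-X)) hpneg_deg hqneg_deg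
          φ₂ hdφ₂ c hc heq2 htopφ₂
        have hder2 : ∀ t, deriv φ₂ t = deriv φ (-t) := by
          intro t
          have e1 : deriv φ₂ t = -deriv (fun s => φ (-s)) t := deriv.neg
          rw [e1, deriv_comp_neg, neg_neg]
        have hT' : Tendsto (fun t => deriv φ (-t)) atTop (𝓝 L) := hT.congr hder2
        have hT'' : Tendsto (deriv φ) atBot (𝓝 L) := by
          have := hT'.comp tendsto_neg_atBot_atTop
          simpa [Function.comp_def, neg_neg] using this
        exact ⟨L, hL, by simpa [abs_of_pos hL] using hT''.abs⟩
    · -- decreasing case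
      constructor
      · set φ₃ : ℝ → ℝ := fun t => -φ t with hφ₃def
        have hdφ₃ : Differentiable ℝ φ₃ := hdφ.neg
        have heq3 : ∀ t : ℝ, (q.comp (-X : Polynomial ℝ)).eval (φ₃ t) = c * p.eval t := by
          intro t
          rw [hpneg_eval q, hφ₃def]
          simp only [neg_neg]
          exact h t
        have hm3 : StrictMono φ₃ := fun x y hxy => neg_lt_neg (hm hxy)
        have htopφ₃ : Tendsto φ₃ atTop atTop :=
          hm3.monotone.tendsto_atTop_atTop (fun b => ⟨ψ (-b), by
            rw [hφ₃def]; simp only [hrinv (-b), neg_neg]; exact le_refl b⟩)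
        obtain ⟨L, hL, hT⟩ := lemM d hd p (q.comp (-X)) hpd hqneg_deg φ₃ hdφ₃ c hc
          heq3 htopφ₃
        have hder3 : ∀ t, deriv φ₃ t = -deriv φ t := fun t => deriv.neg
        have hT' : Tendsto (fun t => -deriv φ t) atTop (𝓝 L) := hT.congr hder3
        refine ⟨L, hL, ?_⟩
        have := hT'.abs
        simp only [abs_neg, abs_of_pos hL] at this
        exact this
      · set φ₄ : ℝ → ℝ := fun t => φ (-t) with hφ₄def
        have hdφ₄ : Differentiable ℝ φ₄ := hdφ.comp differentiable_id.neg
        have heq4 : ∀ t : ℝ, q.eval (φ₄ t) = c * (p.comp (-X : Polynomial ℝ)).eval t := by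
          intro t
          rw [hpneg_eval p, hφ₄def]
          exact h (-t)
        have hm4 : StrictMono φ₄ := fun x y hxy => hm (neg_lt_neg hxy)
        have htopφ₄ : Tendsto φ₄ atTop atTop :=
          hm4.monotone.tendsto_atTop_atTop (fun b => ⟨-ψ b, by
            rw [hφ₄def]; simp only [neg_neg, hrinv b]; exact le_refl b⟩)
        obtain ⟨L, hL, hT⟩ := lemM d hd (p.comp (-X)) q hpneg_deg hqd φ₄ hdφ₄ c hc
          heq4 htopφ₄
        have hder4 : ∀ t, deriv φ₄ t = -deriv φ (-t) := fun t => deriv_comp_neg φ t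
        have hT' : Tendsto (fun t => -deriv φ (-t)) atTop (𝓝 L) := hT.congr hder4
        refine ⟨L, hL, ?_⟩
        have h5 := hT'.abs
        simp only [abs_neg] at h5
        have h6 := h5.comp tendsto_neg_atBot_atTop
        simp only [Function.comp_def, neg_neg, abs_of_pos hL] at h6
        exact h6
  obtain ⟨⟨L1, hL1, htopF⟩, ⟨L2, hL2, hbotF⟩⟩ := hlimits
  have hFcont : Continuous (fun t => |deriv φ t|) := hcont.abs
  have hFpos : ∀ t, 0 < |deriv φ t| := fun t => abs_pos.mpr (hφne t)
  obtain ⟨A, B, hA, hAB⟩ := aux_bounds _ hFcont hFpos L1 L2 hL1 hL2 htopF hbotF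
  have hB : 0 < B := lt_of_lt_of_le (hFpos 0) (hAB 0).2
  refine ⟨A, B, hA, hB, fun s t => ⟨?_, ?_⟩⟩
  · -- lower bound via ψ Lipschitz
    have hψbound : ∀ u, ‖deriv ψ u‖ ≤ A⁻¹ := by
      intro u
      have h1 := hinv2 u
      have h2 : deriv ψ u = (deriv φ (ψ u))⁻¹ := eq_inv_of_mul_eq_one_left
        (by rw [mul_comm]; exact h1)
      rw [Real.norm_eq_abs, h2, abs_inv]
      exact inv_anti₀ hA (hAB (ψ u)).1
    have hlip := convex_univ.norm_image_sub_le_of_norm_deriv_le (fun x _ => hdψ x)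
      (fun x _ => hψbound x) (mem_univ (φ t)) (mem_univ (φ s))
    rw [hlinv s, hlinv t, Real.norm_eq_abs, Real.norm_eq_abs] at hlip
    calc A * |s - t| ≤ A * (A⁻¹ * |φ s - φ t|) := mul_le_mul_of_nonneg_left hlip hA.le
      _ = |φ s - φ t| := by field_simp
  · have hlip := convex_univ.norm_image_sub_le_of_norm_deriv_le (fun x _ => hdφ x)
      (fun x _ => by rw [Real.norm_eq_abs]; exact (hAB x).2) (mem_univ t) (mem_univ s)
    simpa [Real.norm_eq_abs, abs_sub_comm (φ s) (φ t), abs_sub_comm s t] using hlip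
end

section
/- If two nonconstant polynomial functions f, g : ℝ → ℝ are Lipschitz equivalent, then they have the same number of critical points. -/
/-- Two polynomial functions are Lipschitz equivalent if g ∘ φ = c·f for some
bi-Lipschitz homeomorphism φ of ℝ and some constant c > 0. -/
def LipEquivPoly (p q : Polynomial ℝ) : Prop :=
  ∃ φ : ℝ → ℝ, BiLipschitz φ ∧ ∃ c : ℝ, 0 < c ∧ ∀ t : ℝ, q.eval (φ t) = c * p.eval t

open Polynomial Filter Topology

lemma key_iff (p q : Polynomial ℝ) (φ : ℝ → ℝ) (hinj : Function.Injective φ)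
    (A B : ℝ) (hA : 0 < A)
    (hbound : ∀ s t : ℝ, A * |s - t| ≤ |φ s - φ t| ∧ |φ s - φ t| ≤ B * |s - t|)
    (c : ℝ) (hc : 0 < c) (heq : ∀ t : ℝ, q.eval (φ t) = c * p.eval t) (t0 : ℝ) :
    (Polynomial.derivative p).eval t0 = 0 ↔ (Polynomial.derivative q).eval (φ t0) = 0 := by
  set s0 := φ t0 with hs0
  have hB0 : 0 ≤ B := by
    have h1 := (hbound (t0 + 1) t0).1
    have h2 := (hbound (t0 + 1) t0).2
    have habs : |(t0 + 1) - t0| = 1 := by norm_num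
    rw [habs] at h1 h2
    nlinarith
  have hφcont : Continuous φ := by
    apply LipschitzWith.continuous (K := ⟨B, hB0⟩)
    apply LipschitzWith.of_dist_le_mul
    intro s t
    rw [Real.dist_eq, Real.dist_eq]
    exact (hbound s t).2
  have hφtend : Filter.Tendsto φ (𝓝[≠] t0) (𝓝[≠] s0) := by
    refine tendsto_nhdsWithin_iff.mpr ⟨(hφcont.continuousAt).mono_left nhdsWithin_le_nhds, ?_⟩
    filter_upwards [self_mem_nhdsWithin] with t ht
    simp only [Set.mem_compl_iff, Set.mem_singleton_iff] at ht ⊢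
    exact fun hcontra => ht (hinj hcontra)
  -- difference quotient of q at s0 composed with φ
  have hq' : HasDerivAt (fun s => q.eval s) ((Polynomial.derivative q).eval s0) s0 :=
    q.hasDerivAt s0
  have hQ : Filter.Tendsto (fun t => (q.eval (φ t) - q.eval s0) / (φ t - s0)) (𝓝[≠] t0)
      (𝓝 ((Polynomial.derivative q).eval s0)) := by
    have := (hasDerivAt_iff_tendsto_slope.mp hq').comp hφtend
    refine this.congr (fun t => ?_)
    simp [Function.comp, slope_def_field, div_eq_div_iff_comm]
  have hp' : HasDerivAt (fun t => c * p.eval t) (c * (Polynomial.derivative p).eval t0) t0 :=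
    (p.hasDerivAt t0).const_mul c
  have hF : Filter.Tendsto (fun t => (q.eval (φ t) - q.eval s0) / (t - t0)) (𝓝[≠] t0)
      (𝓝 (c * (Polynomial.derivative p).eval t0)) := by
    have := hasDerivAt_iff_tendsto_slope.mp hp'
    refine this.congr (fun t => ?_)
    rw [slope_def_field]
    rw [heq t, heq t0]
  -- basic facts about t ≠ t0
  have hne : ∀ t : ℝ, t ≠ t0 → φ t - s0 ≠ 0 := by
    intro t ht
    exact sub_ne_zero.mpr (fun hcontra => ht (hinj hcontra))
  have hfac : ∀ t : ℝ, t ≠ t0 →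
      (q.eval (φ t) - q.eval s0) / (t - t0)
        = ((q.eval (φ t) - q.eval s0) / (φ t - s0)) * ((φ t - s0) / (t - t0)) := by
    intro t ht
    have h1 := hne t ht
    have h2 : t - t0 ≠ 0 := sub_ne_zero.mpr ht
    field_simp
  have hrbound : ∀ t : ℝ, t ≠ t0 → A ≤ |(φ t - s0) / (t - t0)| := by
    intro t ht
    have htne : (0:ℝ) < |t - t0| := abs_pos.mpr (sub_ne_zero.mpr ht)
    rw [abs_div, le_div_iff₀ htne]
    exact (hbound t t0).1
  constructor
  · -- p' t0 = 0 → q' s0 = 0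
    intro hp0
    by_contra hq0
    -- r = Fquot / Qquot tends to 0
    have hFz : Filter.Tendsto (fun t => (q.eval (φ t) - q.eval s0) / (t - t0)) (𝓝[≠] t0)
        (𝓝 0) := by
      simpa [hp0] using hF
    have hr : Filter.Tendsto
        (fun t => ((q.eval (φ t) - q.eval s0) / (t - t0)) / ((q.eval (φ t) - q.eval s0) / (φ t - s0)))
        (𝓝[≠] t0) (𝓝 0) := by
      have := hFz.div hQ hq0
      rw [zero_div] at this
      exact this
    have hrc : Filter.Tendsto (fun t => (φ t - s0) / (t - t0)) (𝓝[≠] t0) (𝓝 0) := by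
      -- eventually Qquot ≠ 0
      have hev : ∀ᶠ t in 𝓝[≠] t0,
          ((q.eval (φ t) - q.eval s0) / (t - t0)) / ((q.eval (φ t) - q.eval s0) / (φ t - s0))
            = (φ t - s0) / (t - t0) := by
        have hQne : ∀ᶠ t in 𝓝[≠] t0, (q.eval (φ t) - q.eval s0) / (φ t - s0) ≠ 0 := by
          exact hQ.eventually_ne hq0
        filter_upwards [hQne, self_mem_nhdsWithin] with t hQt ht
        simp only [Set.mem_compl_iff, Set.mem_singleton_iff] at ht
        rw [hfac t ht]
        exact mul_div_cancel_left₀ _ hQt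
      exact hr.congr' hev
    have habs : Filter.Tendsto (fun t => |(φ t - s0) / (t - t0)|) (𝓝[≠] t0) (𝓝 0) := by
      simpa using hrc.abs
    have : A ≤ 0 := by
      refine ge_of_tendsto habs ?_
      filter_upwards [self_mem_nhdsWithin] with t ht
      simp only [Set.mem_compl_iff, Set.mem_singleton_iff] at ht
      exact hrbound t ht
    linarith
  · -- q' s0 = 0 → p' t0 = 0
    intro hq0
    have hQz : Filter.Tendsto (fun t => (q.eval (φ t) - q.eval s0) / (φ t - s0)) (𝓝[≠] t0)
        (𝓝 0) := by simpa [hq0] using hQ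
    have hFz : Filter.Tendsto (fun t => (q.eval (φ t) - q.eval s0) / (t - t0)) (𝓝[≠] t0)
        (𝓝 0) := by
      have hBabs : Filter.Tendsto (fun t => |(q.eval (φ t) - q.eval s0) / (φ t - s0)| * B)
          (𝓝[≠] t0) (𝓝 0) := by
        have := (hQz.abs.mul_const B)
        simpa using this
      rw [tendsto_zero_iff_abs_tendsto_zero]
      refine squeeze_zero' ?_ ?_ hBabs
      · filter_upwards with t using abs_nonneg _
      · filter_upwards [self_mem_nhdsWithin] with t ht
        simp only [Set.mem_compl_iff, Set.mem_singleton_iff] at ht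
        simp only [Function.comp_apply]
        rw [hfac t ht, abs_mul]
        have htne : (0:ℝ) < |t - t0| := abs_pos.mpr (sub_ne_zero.mpr ht)
        have : |(φ t - s0) / (t - t0)| ≤ B := by
          rw [abs_div, div_le_iff₀ htne]
          exact (hbound t t0).2
        exact mul_le_mul_of_nonneg_left this (abs_nonneg _)
    have huniq : c * (Polynomial.derivative p).eval t0 = 0 := tendsto_nhds_unique hF hFz
    exact (mul_eq_zero.mp huniq).resolve_left (ne_of_gt hc)

/-- Lipschitz equivalent nonconstant polynomial functions have the same number of
critical points. -/
theorem stmt5 (p q : Polynomial ℝ) (hp : 0 < p.natDegree) (hq : 0 < q.natDegree)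
    (h : LipEquivPoly p q) :
    {t : ℝ | (Polynomial.derivative p).eval t = 0}.ncard =
      {t : ℝ | (Polynomial.derivative q).eval t = 0}.ncard := by
  obtain ⟨φ, ⟨⟨hinj, hsurj⟩, A, B, hA, hB, hbound⟩, c, hc, heq⟩ := h
  have key := fun t0 => key_iff p q φ hinj A B hA hbound c hc heq t0
  have himg : φ '' {t : ℝ | (Polynomial.derivative p).eval t = 0}
      = {t : ℝ | (Polynomial.derivative q).eval t = 0} := by
    ext s
    constructor
    · rintro ⟨t, ht, rfl⟩
      exact (key t).mp ht
    · intro hs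
      obtain ⟨t, rfl⟩ := hsurj s
      exact ⟨t, (key t).mpr hs, rfl⟩
  rw [← himg, Set.ncard_image_of_injective _ hinj]
end

section
/- If f, g : ℝ → ℝ are polynomial functions of the same degree d ≥ 1 and neither f nor g has any critical point, then f and g are Lipschitz equivalent. -/
open Polynomial Filter Function Asymptotics

section Helpers

-- upper growth bound
lemma poly_upper (r : ℝ[X]) : ∃ C : ℝ, 0 < C ∧ ∀ x : ℝ, |r.eval x| ≤ C * (1 + |x|) ^ r.natDegree := by
  set n := r.natDegree
  refine ⟨(∑ i ∈ Finset.range (n+1), |r.coeff i|) + 1, by have : (0:ℝ) ≤ ∑ i ∈ Finset.range (n+1), |r.coeff i| := Finset.sum_nonneg fun i _ => abs_nonneg _; linarith, fun x => ?_⟩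
  have h1 : (1:ℝ) ≤ 1 + |x| := by have := abs_nonneg x; linarith
  have hb : (0:ℝ) ≤ (1 + |x|) ^ n := by positivity
  calc |r.eval x| = |∑ i ∈ Finset.range (n+1), r.coeff i * x ^ i| := by
        rw [Polynomial.eval_eq_sum_range]
    _ ≤ ∑ i ∈ Finset.range (n+1), |r.coeff i * x ^ i| := Finset.abs_sum_le_sum_abs _ _
    _ ≤ ∑ i ∈ Finset.range (n+1), |r.coeff i| * (1 + |x|) ^ n := by
        refine Finset.sum_le_sum fun i hi => ?_
        rw [abs_mul]
        refine mul_le_mul_of_nonneg_left ?_ (abs_nonneg _)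
        rw [abs_pow]
        calc |x| ^ i ≤ (1 + |x|) ^ i := pow_le_pow_left₀ (abs_nonneg x) (by linarith) i
          _ ≤ (1 + |x|) ^ n := pow_le_pow_right₀ h1 (Nat.lt_succ_iff.mp (Finset.mem_range.mp hi))
    _ = (∑ i ∈ Finset.range (n+1), |r.coeff i|) * (1 + |x|) ^ n := by rw [Finset.sum_mul]
    _ ≤ ((∑ i ∈ Finset.range (n+1), |r.coeff i|) + 1) * (1 + |x|) ^ n := by
        refine mul_le_mul_of_nonneg_right (by linarith) hb

lemma poly_tail_top (r : ℝ[X]) :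
    ∃ R : ℝ, ∀ x : ℝ, R ≤ x → |r.leadingCoeff| / 2 * |x| ^ r.natDegree ≤ |r.eval x| := by
  have heq := Polynomial.isEquivalent_atTop_lead (P := r)
  have hlo : (fun x => r.eval x - r.leadingCoeff * x ^ r.natDegree) =o[atTop]
      (fun x : ℝ => r.leadingCoeff * x ^ r.natDegree) := heq.isLittleO
  have hev := hlo.def (by norm_num : (0:ℝ) < 1/2)
  rw [eventually_atTop] at hev
  obtain ⟨R, hR⟩ := hev
  refine ⟨R, fun x hx => ?_⟩
  have h := hR x hx
  simp only [Real.norm_eq_abs] at h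
  have h2 : |r.leadingCoeff * x ^ r.natDegree| = |r.leadingCoeff| * |x| ^ r.natDegree := by
    rw [abs_mul, abs_pow]
  have h3 := abs_sub_abs_le_abs_sub (r.leadingCoeff * x ^ r.natDegree) (r.eval x)
  rw [abs_sub_comm] at h3
  nlinarith [abs_nonneg (r.eval x)]

lemma poly_tail (r : ℝ[X]) (hr : r ≠ 0) :
    ∃ c R : ℝ, 0 < c ∧ 1 ≤ R ∧ ∀ x : ℝ, R ≤ |x| →
      c * (1 + |x|) ^ r.natDegree ≤ |r.eval x| := by
  set n := r.natDegree with hn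
  obtain ⟨R₁, hR₁⟩ := poly_tail_top r
  set s : ℝ[X] := r.comp (-X) with hs
  have hsd : s.natDegree = n := by simp [hs, natDegree_comp, hn]
  have hslead : |s.leadingCoeff| = |r.leadingCoeff| := by
    rw [hs, leadingCoeff_comp (by simp)]
    simp [abs_mul, abs_pow]
  have hseval : ∀ x : ℝ, s.eval x = r.eval (-x) := by intro x; simp [hs, eval_comp]
  obtain ⟨R₂, hR₂⟩ := poly_tail_top s
  have hlead : (0:ℝ) < |r.leadingCoeff| := abs_pos.mpr (leadingCoeff_ne_zero.mpr hr)
  refine ⟨|r.leadingCoeff| / 2 / 2 ^ n, max 1 (max R₁ R₂), by positivity, le_max_left _ _,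
    fun x hx => ?_⟩
  have hx1 : (1:ℝ) ≤ |x| := le_trans (le_max_left _ _) hx
  have hpow : (1 + |x|) ^ n ≤ 2 ^ n * |x| ^ n := by
    rw [← mul_pow]
    exact pow_le_pow_left₀ (by positivity) (by linarith) n
  have key : |r.leadingCoeff| / 2 * |x| ^ n ≤ |r.eval x| := by
    rcases le_or_gt 0 x with hx0 | hx0
    · have : R₁ ≤ x := by rw [abs_of_nonneg hx0] at hx; exact le_trans (le_trans (le_max_left _ _) (le_max_right _ _)) hx
      exact hR₁ x this
    · have hxx : R₂ ≤ -x := by rw [abs_of_neg hx0] at hx; exact le_trans (le_trans (le_max_right _ _) (le_max_right _ _)) hx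
      have := hR₂ (-x) hxx
      rw [hsd, hslead, hseval, neg_neg, abs_neg] at this
      exact this
  have h2 : (0:ℝ) < 2 ^ n := by positivity
  calc |r.leadingCoeff| / 2 / 2 ^ n * (1 + |x|) ^ n
      ≤ |r.leadingCoeff| / 2 / 2 ^ n * (2 ^ n * |x| ^ n) := by
        refine mul_le_mul_of_nonneg_left hpow (by positivity)
    _ = |r.leadingCoeff| / 2 * |x| ^ n := by field_simp
    _ ≤ |r.eval x| := key

lemma poly_lower (r : Polynomial ℝ) (hr : ∀ x : ℝ, r.eval x ≠ 0) :
    ∃ c : ℝ, 0 < c ∧ ∀ x : ℝ, c * (1 + |x|) ^ r.natDegree ≤ |r.eval x| := by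
  set n := r.natDegree
  have hr0 : r ≠ 0 := fun h => hr 0 (by simp [h])
  obtain ⟨c, R, hc, hR1, htail⟩ := poly_tail r hr0
  have hcont : Continuous fun x : ℝ => |r.eval x| := (Polynomial.continuous r).abs
  have hne : (Set.Icc (-R) R).Nonempty := ⟨0, by constructor <;> linarith⟩
  obtain ⟨x₀, hx₀, hmin⟩ := isCompact_Icc.exists_isMinOn hne hcont.continuousOn
  have hm : 0 < |r.eval x₀| := abs_pos.mpr (hr x₀)
  have hRpos : (0:ℝ) < 1 + R := by linarith
  refine ⟨min c (|r.eval x₀| / (1 + R) ^ n), lt_min hc (by positivity), fun x => ?_⟩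
  rcases le_or_gt R |x| with hx | hx
  · calc min c (|r.eval x₀| / (1 + R) ^ n) * (1 + |x|) ^ n
        ≤ c * (1 + |x|) ^ n := by
          refine mul_le_mul_of_nonneg_right (min_le_left _ _) (by positivity)
      _ ≤ |r.eval x| := htail x hx
  · have hmem : x ∈ Set.Icc (-R) R := by
      constructor <;> [linarith [neg_abs_le x]; linarith [le_abs_self x]]
    have h1 : (1 + |x|) ^ n ≤ (1 + R) ^ n :=
      pow_le_pow_left₀ (by positivity) (by linarith) n
    calc min c (|r.eval x₀| / (1 + R) ^ n) * (1 + |x|) ^ n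
        ≤ |r.eval x₀| / (1 + R) ^ n * (1 + R) ^ n := by
          refine mul_le_mul (min_le_right _ _) h1 (by positivity) (by positivity)
      _ = |r.eval x₀| := by field_simp
      _ ≤ |r.eval x| := hmin hmem

lemma odd_surj (r : Polynomial ℝ) (hodd : Odd r.natDegree) :
    Function.Surjective (fun x : ℝ => r.eval x) := by
  have hn0 : r.natDegree ≠ 0 := by rintro h; rw [h] at hodd; simp at hodd
  have hr0 : r ≠ 0 := fun h => hn0 (by simp [h])
  have hdeg : 0 < r.degree := natDegree_pos_iff_degree_pos.mp (Nat.pos_of_ne_zero hn0)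
  set s : Polynomial ℝ := r.comp (-X) with hs
  have hsd : s.natDegree = r.natDegree := by simp [hs, natDegree_comp]
  have hsdeg : 0 < s.degree := natDegree_pos_iff_degree_pos.mp (hsd ▸ Nat.pos_of_ne_zero hn0)
  have hslead : s.leadingCoeff = -r.leadingCoeff := by
    rw [hs, leadingCoeff_comp (by simp)]
    simp [hodd.neg_one_pow]
  have hseval : ∀ x : ℝ, s.eval x = r.eval (-x) := by intro x; simp [hs, eval_comp]
  have hcont : Continuous fun x : ℝ => r.eval x := Polynomial.continuous r
  rcases (leadingCoeff_ne_zero.mpr hr0).lt_or_gt with hlt | hlt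
  · -- leadingCoeff < 0 : r.eval → -∞ at top, +∞ at bot
    have htop : Tendsto (fun x : ℝ => r.eval x) atTop atBot :=
      r.tendsto_atBot_of_leadingCoeff_nonpos hdeg hlt.le
    have hstop : Tendsto (fun x : ℝ => s.eval x) atTop atTop :=
      s.tendsto_atTop_of_leadingCoeff_nonneg hsdeg (by rw [hslead]; linarith)
    have hbot : Tendsto (fun x : ℝ => r.eval x) atBot atTop := by
      have := hstop.comp tendsto_neg_atBot_atTop
      simpa [Function.comp_def, hseval] using this
    intro y
    obtain ⟨a, b, hab⟩ : ∃ a b : ℝ, r.eval a ≤ y ∧ y ≤ r.eval b := by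
      obtain ⟨a, ha⟩ := (htop.eventually (eventually_le_atBot y)).exists
      obtain ⟨b, hb⟩ := (hbot.eventually (eventually_ge_atTop y)).exists
      exact ⟨a, b, ha, hb⟩
    obtain ⟨x, _, hx⟩ := intermediate_value_uIcc (a := a) (b := b)
      (hcont.continuousOn) (Set.mem_uIcc.mpr (Or.inl ⟨hab.1, hab.2⟩))
    exact ⟨x, hx⟩
  · have htop : Tendsto (fun x : ℝ => r.eval x) atTop atTop :=
      r.tendsto_atTop_of_leadingCoeff_nonneg hdeg hlt.le
    have hstop : Tendsto (fun x : ℝ => s.eval x) atTop atBot :=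
      s.tendsto_atBot_of_leadingCoeff_nonpos hsdeg (by rw [hslead]; linarith)
    have hbot : Tendsto (fun x : ℝ => r.eval x) atBot atBot := by
      have := hstop.comp tendsto_neg_atBot_atTop
      simpa [Function.comp_def, hseval] using this
    exact hcont.surjective htop hbot

lemma sign_const (r : Polynomial ℝ) (hr : ∀ x : ℝ, r.eval x ≠ 0) :
    (∀ x : ℝ, 0 < r.eval x) ∨ (∀ x : ℝ, r.eval x < 0) := by
  have hcont : Continuous fun x : ℝ => r.eval x := Polynomial.continuous r
  by_contra h
  push_neg at h
  obtain ⟨⟨a, ha⟩, ⟨b, hb⟩⟩ := h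
  have ha' : r.eval a < 0 := ha.lt_of_ne (hr a)
  have hb' : 0 < r.eval b := hb.lt_of_ne' (hr b)
  obtain ⟨x, _, hx⟩ := intermediate_value_uIcc (a := a) (b := b) hcont.continuousOn
    (Set.mem_uIcc.mpr (Or.inl ⟨ha'.le, hb'.le⟩))
  exact hr x hx

lemma poly_inv (q : Polynomial ℝ) (hq : ∀ t : ℝ, (Polynomial.derivative q).eval t ≠ 0)
    (hsurj : Function.Surjective fun x : ℝ => q.eval x) :
    ∃ g : ℝ → ℝ, Continuous g ∧ (∀ y, q.eval (g y) = y) ∧ (∀ x, g (q.eval x) = x) := by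
  rcases sign_const _ hq with hpos | hneg
  · have hmono : StrictMono fun x : ℝ => q.eval x :=
      strictMono_of_deriv_pos fun x => by rw [Polynomial.deriv]; exact hpos x
    set e := StrictMono.orderIsoOfSurjective _ hmono hsurj with he
    have hee : ∀ x, e x = q.eval x := fun x => rfl
    refine ⟨e.symm, OrderIso.continuous _, fun y => ?_, fun x => ?_⟩
    · have := e.apply_symm_apply y
      rwa [hee] at this
    · have : e.symm (e x) = x := e.symm_apply_apply x
      rwa [hee] at this
  · have hmono : StrictMono fun x : ℝ => -q.eval x :=
      strictMono_of_deriv_pos fun x => by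
        have h := ((q.hasDerivAt x).neg).deriv
        rw [show (fun x : ℝ => -q.eval x) = -(fun x => q.eval x) from rfl, h]
        simpa using hneg x
    have hsurj' : Function.Surjective fun x : ℝ => -q.eval x := by
      intro y
      obtain ⟨x, hx⟩ := hsurj (-y)
      exact ⟨x, by simp only [hx]; ring⟩
    set e := StrictMono.orderIsoOfSurjective _ hmono hsurj' with he
    have hee : ∀ x, e x = -q.eval x := fun x => rfl
    refine ⟨fun y => e.symm (-y), (OrderIso.continuous _).comp continuous_neg,
      fun y => ?_, fun x => ?_⟩
    · have := e.apply_symm_apply (-y)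
      rw [hee] at this
      linarith [this]
    · have : e.symm (e x) = x := e.symm_apply_apply x
      rw [hee] at this
      simpa using this

-- derivative natDegree
lemma deriv_natDegree (r : Polynomial ℝ) (hr : 0 < r.natDegree) :
    (Polynomial.derivative r).natDegree = r.natDegree - 1 :=
  natDegree_eq_of_degree_eq_some (degree_derivative_eq r hr)

-- d is odd
lemma d_odd (d : ℕ) (hd : 1 ≤ d) (q : Polynomial ℝ) (hqd : q.natDegree = d)
    (hq : ∀ t : ℝ, (Polynomial.derivative q).eval t ≠ 0) : Odd d := by
  by_contra h
  have heven : Even d := Nat.not_odd_iff_even.mp h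
  have hodd : Odd ((Polynomial.derivative q).natDegree) := by
    rw [deriv_natDegree q (hqd ▸ hd), hqd]
    rw [Nat.odd_iff]; rw [Nat.even_iff] at heven; omega
  obtain ⟨x, hx⟩ := odd_surj _ hodd 0
  exact hq x hx

lemma oneSide (d : ℕ) (hd : 1 ≤ d) (p q : Polynomial ℝ)
    (hpd : p.natDegree = d) (hqd : q.natDegree = d)
    (hp : ∀ t : ℝ, (Polynomial.derivative p).eval t ≠ 0)
    (hq : ∀ t : ℝ, (Polynomial.derivative q).eval t ≠ 0) :
    ∃ φ : ℝ → ℝ, (∀ t, q.eval (φ t) = p.eval t) ∧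
      ∃ M : ℝ, 0 < M ∧ ∀ s t : ℝ, |φ s - φ t| ≤ M * |s - t| := by
  have hodd : Odd d := d_odd d hd q hqd hq
  have hsurjq : Function.Surjective fun x : ℝ => q.eval x := odd_surj q (hqd ▸ hodd)
  obtain ⟨g, hgc, hgq, hqg⟩ := poly_inv q hq hsurjq
  refine ⟨fun t => g (p.eval t), fun t => hgq _, ?_⟩
  -- derivative facts
  have hp0 : (0:ℕ) < p.natDegree := hpd ▸ hd
  have hq0 : (0:ℕ) < q.natDegree := hqd ▸ hd
  have hpd' : (Polynomial.derivative p).natDegree = d - 1 := by rw [deriv_natDegree p hp0, hpd]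
  have hqd' : (Polynomial.derivative q).natDegree = d - 1 := by rw [deriv_natDegree q hq0, hqd]
  -- bounds
  obtain ⟨Cp, hCp, hCpb⟩ := poly_upper (Polynomial.derivative p)
  obtain ⟨cq, hcq, hcqb⟩ := poly_lower (Polynomial.derivative q) hq
  obtain ⟨Cq, hCq, hCqb⟩ := poly_upper q
  have hpne : p ≠ 0 := fun h => by simp [h] at hpd; omega
  obtain ⟨cp, R, hcp, hR, htail⟩ := poly_tail p hpne
  rw [hpd'] at hCpb
  rw [hqd'] at hcqb
  rw [hqd] at hCqb
  rw [hpd] at htail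
  set K : ℝ := max 1 (Cq / cp) with hK
  have hK1 : (1:ℝ) ≤ K := le_max_left _ _
  have hKpos : (0:ℝ) < K := by linarith
  -- key comparison for large |t|
  have hgrow : ∀ t : ℝ, R ≤ |t| → (1 + |t|) ≤ K * (1 + |g (p.eval t)|) := by
    intro t ht
    set b : ℝ := 1 + |g (p.eval t)| with hb
    have hb1 : (1:ℝ) ≤ b := by have := abs_nonneg (g (p.eval t)); linarith
    have h1 : cp * (1 + |t|) ^ d ≤ |p.eval t| := htail t ht
    have h2 : |p.eval t| = |q.eval (g (p.eval t))| := by rw [hgq]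
    have h3 : |q.eval (g (p.eval t))| ≤ Cq * b ^ d := hCqb _
    have h4 : (1 + |t|) ^ d ≤ (Cq / cp) * b ^ d := by
      rw [div_mul_eq_mul_div, le_div_iff₀ hcp]
      nlinarith
    have h5 : (1 + |t|) ^ d ≤ (K * b) ^ d := by
      calc (1 + |t|) ^ d ≤ (Cq / cp) * b ^ d := h4
        _ ≤ K * b ^ d := by
            refine mul_le_mul_of_nonneg_right (le_max_right _ _) (by positivity)
        _ ≤ K ^ d * b ^ d := by
            refine mul_le_mul_of_nonneg_right ?_ (by positivity)
            exact le_self_pow₀ hK1 (by omega)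
        _ = (K * b) ^ d := (mul_pow _ _ _).symm
    have habs : (0:ℝ) ≤ 1 + |t| := by positivity
    exact (pow_le_pow_iff_left₀ habs (by positivity) (by omega)).mp h5
  -- derivative pointwise bound
  set M : ℝ := max (Cp * K ^ (d-1) / cq) (Cp * (1 + R) ^ (d-1) / cq) with hM
  have hMpos : 0 < M := lt_max_of_lt_left (by positivity)
  have hbound : ∀ t : ℝ, |(Polynomial.derivative p).eval t| ≤
      M * |(Polynomial.derivative q).eval (g (p.eval t))| := by
    intro t
    set b : ℝ := 1 + |g (p.eval t)| with hb
    have hb1 : (1:ℝ) ≤ b := by have := abs_nonneg (g (p.eval t)); linarith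
    have hq' : cq * b ^ (d-1) ≤ |(Polynomial.derivative q).eval (g (p.eval t))| := hcqb _
    rcases le_or_gt R |t| with ht | ht
    · have h1 : |(Polynomial.derivative p).eval t| ≤ Cp * (1 + |t|) ^ (d-1) := hCpb t
      have h2 : (1 + |t|) ^ (d-1) ≤ (K * b) ^ (d-1) :=
        pow_le_pow_left₀ (by positivity) (hgrow t ht) _
      calc |(Polynomial.derivative p).eval t| ≤ Cp * (K * b) ^ (d-1) := by nlinarith
        _ = (Cp * K ^ (d-1) / cq) * (cq * b ^ (d-1)) := by rw [mul_pow]; field_simp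
        _ ≤ (Cp * K ^ (d-1) / cq) * |(Polynomial.derivative q).eval (g (p.eval t))| := by
            refine mul_le_mul_of_nonneg_left hq' (by positivity)
        _ ≤ M * |(Polynomial.derivative q).eval (g (p.eval t))| := by
            refine mul_le_mul_of_nonneg_right (le_max_left _ _) (abs_nonneg _)
    · have h1 : |(Polynomial.derivative p).eval t| ≤ Cp * (1 + R) ^ (d-1) := by
        refine (hCpb t).trans ?_
        refine mul_le_mul_of_nonneg_left ?_ hCp.le
        exact pow_le_pow_left₀ (by positivity) (by linarith) _
      have h2 : cq ≤ |(Polynomial.derivative q).eval (g (p.eval t))| := by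
        calc cq = cq * 1 := (mul_one cq).symm
          _ ≤ cq * b ^ (d-1) := by
              refine mul_le_mul_of_nonneg_left (one_le_pow₀ hb1) hcq.le
          _ ≤ _ := hq'
      calc |(Polynomial.derivative p).eval t| ≤ Cp * (1 + R) ^ (d-1) := h1
        _ = (Cp * (1 + R) ^ (d-1) / cq) * cq := by field_simp
        _ ≤ (Cp * (1 + R) ^ (d-1) / cq) * |(Polynomial.derivative q).eval (g (p.eval t))| := by
            refine mul_le_mul_of_nonneg_left h2 (by positivity)
        _ ≤ M * |(Polynomial.derivative q).eval (g (p.eval t))| := by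
            refine mul_le_mul_of_nonneg_right (le_max_right _ _) (abs_nonneg _)
  -- derivative of φ
  have hgderiv : ∀ y : ℝ, HasDerivAt g ((Polynomial.derivative q).eval (g y))⁻¹ y := by
    intro y
    exact HasDerivAt.of_local_left_inverse hgc.continuousAt (q.hasDerivAt (g y)) (hq _)
      (Eventually.of_forall hgq)
  have hφderiv : ∀ t : ℝ, HasDerivAt (fun t => g (p.eval t))
      (((Polynomial.derivative q).eval (g (p.eval t)))⁻¹ * (Polynomial.derivative p).eval t) t := by
    intro t
    exact (hgderiv (p.eval t)).comp t (p.hasDerivAt t)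
  have hnorm : ∀ x : ℝ, ‖((Polynomial.derivative q).eval (g (p.eval x)))⁻¹ * (Polynomial.derivative p).eval x‖ ≤ M := by
    intro x
    rw [Real.norm_eq_abs, abs_mul, abs_inv]
    have hqx : 0 < |(Polynomial.derivative q).eval (g (p.eval x))| := abs_pos.mpr (hq _)
    rw [inv_mul_le_iff₀ hqx]
    calc |(Polynomial.derivative p).eval x| ≤ M * |(Polynomial.derivative q).eval (g (p.eval x))| := hbound x
      _ = _ := by ring
  refine ⟨M, hMpos, fun s t => ?_⟩
  have := Convex.norm_image_sub_le_of_norm_hasDerivWithin_le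
    (f := fun t => g (p.eval t))
    (f' := fun t => ((Polynomial.derivative q).eval (g (p.eval t)))⁻¹ * (Polynomial.derivative p).eval t)
    (s := Set.univ) (fun x _ => (hφderiv x).hasDerivWithinAt)
    (fun x _ => hnorm x) convex_univ (Set.mem_univ t) (Set.mem_univ s)
  simpa [Real.norm_eq_abs] using this

lemma poly_inj (r : Polynomial ℝ) (hr : ∀ t : ℝ, (Polynomial.derivative r).eval t ≠ 0) :
    Function.Injective fun x : ℝ => r.eval x := by
  rcases sign_const _ hr with hpos | hneg
  · exact (strictMono_of_deriv_pos fun x => by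
      rw [Polynomial.deriv]; exact hpos x : StrictMono fun x : ℝ => r.eval x).injective
  · exact (strictAnti_of_deriv_neg fun x => by
      rw [Polynomial.deriv]; exact hneg x : StrictAnti fun x : ℝ => r.eval x).injective
end Helpers

/-- Polynomial functions of the same degree d ≥ 1 having no critical points are
Lipschitz equivalent. -/
theorem stmt6 (d : ℕ) (hd : 1 ≤ d) (p q : Polynomial ℝ)
    (hpd : p.natDegree = d) (hqd : q.natDegree = d)
    (hp : ∀ t : ℝ, (Polynomial.derivative p).eval t ≠ 0)
    (hq : ∀ t : ℝ, (Polynomial.derivative q).eval t ≠ 0) :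
    LipEquivPoly p q := by
  obtain ⟨φ, hφ, M, hM, hφlip⟩ := oneSide d hd p q hpd hqd hp hq
  obtain ⟨ψ, hψ, N, hN, hψlip⟩ := oneSide d hd q p hqd hpd hq hp
  have hpinj := poly_inj p hp
  have hqinj := poly_inj q hq
  have hleft : ∀ t : ℝ, ψ (φ t) = t := by
    intro t
    apply hpinj
    show p.eval (ψ (φ t)) = p.eval t
    rw [hψ (φ t), hφ t]
  have hright : ∀ t : ℝ, φ (ψ t) = t := by
    intro t
    apply hqinj
    show q.eval (φ (ψ t)) = q.eval t
    rw [hφ (ψ t), hψ t]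
  refine ⟨φ, ⟨⟨Function.LeftInverse.injective hleft,
    Function.RightInverse.surjective hright⟩, N⁻¹, M, inv_pos.mpr hN, hM, fun s t => ?_⟩,
    1, one_pos, fun t => by rw [hφ t, one_mul]⟩
  refine ⟨?_, hφlip s t⟩
  rw [inv_mul_le_iff₀ hN]
  calc |s - t| = |ψ (φ s) - ψ (φ t)| := by rw [hleft, hleft]
    _ ≤ N * |φ s - φ t| := hψlip (φ s) (φ t)
end

section
/- Let f, g : ℝ → ℝ be polynomial functions of the same even degree d ≥ 2, each with exactly one critical point (t₀ for f, s₀ for g) of the same multiplicity k, and with f(t₀), g(s₀) of the same sign. Then f and g are Lipschitz equivalent if and only if t₀ and s₀ are either both absolute minimum points or both absolute maximum points of f and g respectively. -/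
open Polynomial Filter Set Topology



lemma hfun_ub {k e : ℕ} (hk : 1 ≤ k) {K a b : ℝ} (hK : 0 < K) (hb : 0 ≤ b) (ha : 0 < a)
    (h : b ^ k * (b ^ 2 + 1) ^ e ≤ K * (a ^ k * (a ^ 2 + 1) ^ e)) : b ≤ max 1 K * a := by
  set M := max 1 K with hM
  have hM1 : 1 ≤ M := le_max_left _ _
  have hKM : K ≤ M ^ k := le_trans (le_max_right 1 K) (le_self_pow₀ (by linarith) (by omega))
  by_contra hcon
  push_neg at hcon
  have hba : a < b := lt_of_le_of_lt (by nlinarith) hcon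
  have h1 : M ^ k * a ^ k < b ^ k := by
    have h' : (M * a) ^ k < b ^ k := pow_lt_pow_left₀ hcon (by positivity) (by omega)
    rw [mul_pow] at h'; exact h'
  have h2 : (a ^ 2 + 1) ^ e ≤ (b ^ 2 + 1) ^ e := by
    apply pow_le_pow_left₀ (by positivity); nlinarith
  have hQa : (0:ℝ) < (a ^ 2 + 1) ^ e := by positivity
  have hQb : (0:ℝ) < (b ^ 2 + 1) ^ e := by positivity
  have hak : (0:ℝ) < a ^ k := pow_pos ha k
  have c1 : K * (a ^ k * (a ^ 2 + 1) ^ e) ≤ M ^ k * a ^ k * (b ^ 2 + 1) ^ e := by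
    calc K * (a ^ k * (a ^ 2 + 1) ^ e) ≤ M ^ k * (a ^ k * (a ^ 2 + 1) ^ e) := by
          apply mul_le_mul_of_nonneg_right hKM (by positivity)
      _ ≤ M ^ k * (a ^ k * (b ^ 2 + 1) ^ e) := by
          apply mul_le_mul_of_nonneg_left (mul_le_mul_of_nonneg_left h2 hak.le) (by positivity)
      _ = M ^ k * a ^ k * (b ^ 2 + 1) ^ e := by ring
  have c2 : M ^ k * a ^ k * (b ^ 2 + 1) ^ e < b ^ k * (b ^ 2 + 1) ^ e :=
    mul_lt_mul_of_pos_right h1 hQb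
  linarith

lemma hfun_lb {k e : ℕ} (hk : 1 ≤ k) {K a b : ℝ} (hK : 0 < K) (hb : 0 ≤ b) (ha : 0 < a)
    (h : K * (a ^ k * (a ^ 2 + 1) ^ e) ≤ b ^ k * (b ^ 2 + 1) ^ e) : min 1 K * a ≤ b := by
  set m := min 1 K with hm
  have hm0 : 0 < m := lt_min one_pos hK
  have hm1 : m ≤ 1 := min_le_left _ _
  have hmk : m ^ k ≤ K := le_trans (pow_le_of_le_one hm0.le hm1 (by omega)) (min_le_right _ _)
  by_contra hcon
  push_neg at hcon
  have hba : b < a := lt_of_lt_of_le hcon (by nlinarith)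
  have h1 : b ^ k < m ^ k * a ^ k := by
    have h' : b ^ k < (m * a) ^ k := pow_lt_pow_left₀ hcon hb (by omega)
    rw [mul_pow] at h'; exact h'
  have h2 : (b ^ 2 + 1) ^ e ≤ (a ^ 2 + 1) ^ e := by
    apply pow_le_pow_left₀ (by positivity); nlinarith
  have hQb : (0:ℝ) < (b ^ 2 + 1) ^ e := by positivity
  have hQa : (0:ℝ) < (a ^ 2 + 1) ^ e := by positivity
  have hak : (0:ℝ) < a ^ k := pow_pos ha k
  have c1 : b ^ k * (b ^ 2 + 1) ^ e < m ^ k * a ^ k * (a ^ 2 + 1) ^ e := by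
    calc b ^ k * (b ^ 2 + 1) ^ e ≤ b ^ k * (a ^ 2 + 1) ^ e := by
          apply mul_le_mul_of_nonneg_left h2 (by positivity)
      _ < m ^ k * a ^ k * (a ^ 2 + 1) ^ e := mul_lt_mul_of_pos_right h1 hQa
  have c2 : m ^ k * a ^ k * (a ^ 2 + 1) ^ e ≤ K * (a ^ k * (a ^ 2 + 1) ^ e) := by
    calc m ^ k * a ^ k * (a ^ 2 + 1) ^ e = m ^ k * (a ^ k * (a ^ 2 + 1) ^ e) := by ring
      _ ≤ K * (a ^ k * (a ^ 2 + 1) ^ e) := mul_le_mul_of_nonneg_right hmk (by positivity)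
  linarith



lemma poly_pos_bound (P : Polynomial ℝ) (e : ℕ) (t₀ : ℝ) (hdeg : P.natDegree = 2 * e)
    (hpos : ∀ t : ℝ, 0 < P.eval t) :
    ∃ C₁ C₂ : ℝ, 0 < C₁ ∧ 0 < C₂ ∧ ∀ t : ℝ,
      C₁ * ((t - t₀) ^ 2 + 1) ^ e ≤ P.eval t ∧ P.eval t ≤ C₂ * ((t - t₀) ^ 2 + 1) ^ e := by
  have hP0 : P ≠ 0 := fun h => by simpa [h] using hpos 0
  set Q : Polynomial ℝ := ((X - C t₀) ^ 2 + C 1) ^ e with hQdef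
  have hQeval : ∀ t : ℝ, Q.eval t = ((t - t₀) ^ 2 + 1) ^ e := by
    intro t; simp [hQdef]
  have hQpos : ∀ t : ℝ, 0 < Q.eval t := by intro t; rw [hQeval]; positivity
  have hmonicbase : ((X - C t₀) ^ 2 + C 1).Monic := by
    apply Monic.add_of_left ((monic_X_sub_C t₀).pow 2)
    have h2 : ((X - C t₀) ^ 2 : Polynomial ℝ).degree = 2 := by
      rw [degree_pow, degree_X_sub_C]; rfl
    rw [h2]
    exact lt_of_le_of_lt (degree_C_le) (by decide)
  have hQmonic : Q.Monic := hmonicbase.pow e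
  have hQdeg : Q.natDegree = 2 * e := by
    rw [hQdef, hmonicbase.natDegree_pow]
    have : ((X - C t₀) ^ 2 + C 1).natDegree = 2 := by
      rw [natDegree_add_C, natDegree_pow, natDegree_X_sub_C, mul_one]
    rw [this, mul_comm]
  have hQ0 : Q ≠ 0 := hQmonic.ne_zero
  have hdegeq : P.degree = Q.degree := by
    rw [degree_eq_natDegree hP0, degree_eq_natDegree hQ0, hdeg, hQdeg]
  -- limit at +∞
  have hT : Tendsto (fun x => P.eval x / Q.eval x) atTop (𝓝 (P.leadingCoeff)) := by
    have := Polynomial.div_tendsto_leadingCoeff_div_of_degree_eq P Q hdegeq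
    rwa [hQmonic.leadingCoeff, div_one] at this
  -- limit at -∞ via composition with -X
  have hB : Tendsto (fun x => P.eval x / Q.eval x) atBot (𝓝 (P.leadingCoeff)) := by
    set Pc := P.comp (-X : Polynomial ℝ) with hPc
    set Qc := Q.comp (-X : Polynomial ℝ) with hQc
    have hXdeg : (-X : Polynomial ℝ).natDegree = 1 := by
      rw [natDegree_neg, natDegree_X]
    have hPceval : ∀ x : ℝ, Pc.eval x = P.eval (-x) := by intro x; simp [hPc, eval_comp]
    have hQceval : ∀ x : ℝ, Qc.eval x = Q.eval (-x) := by intro x; simp [hQc, eval_comp]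
    have hPc0 : Pc ≠ 0 := fun h => by
      have := hpos 0; rw [← neg_zero, ← hPceval 0, h] at this; simp at this
    have hQc0 : Qc ≠ 0 := fun h => by
      have := hQpos 0; rw [← neg_zero, ← hQceval 0, h] at this; simp at this
    have hPcdeg : Pc.natDegree = 2 * e := by rw [hPc, natDegree_comp, hXdeg, mul_one, hdeg]
    have hQcdeg : Qc.natDegree = 2 * e := by rw [hQc, natDegree_comp, hXdeg, mul_one, hQdeg]
    have hlcPc : Pc.leadingCoeff = P.leadingCoeff := by
      rw [hPc, leadingCoeff_comp (by rw [hXdeg]; norm_num)]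
      have : (-X : Polynomial ℝ).leadingCoeff = -1 := by
        rw [leadingCoeff_neg, leadingCoeff_X]
      rw [this, hdeg, Even.neg_one_pow (even_two_mul e), mul_one]
    have hlcQc : Qc.leadingCoeff = 1 := by
      rw [hQc, leadingCoeff_comp (by rw [hXdeg]; norm_num)]
      have : (-X : Polynomial ℝ).leadingCoeff = -1 := by
        rw [leadingCoeff_neg, leadingCoeff_X]
      rw [this, hQmonic.leadingCoeff, hQdeg, Even.neg_one_pow (even_two_mul e), one_mul]
    have hdegc : Pc.degree = Qc.degree := by
      rw [degree_eq_natDegree hPc0, degree_eq_natDegree hQc0, hPcdeg, hQcdeg]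
    have hTc : Tendsto (fun x => Pc.eval x / Qc.eval x) atTop (𝓝 (P.leadingCoeff)) := by
      have := Polynomial.div_tendsto_leadingCoeff_div_of_degree_eq Pc Qc hdegc
      rwa [hlcPc, hlcQc, div_one] at this
    have hcomp : Tendsto (fun x : ℝ => Pc.eval (-x) / Qc.eval (-x)) atBot (𝓝 (P.leadingCoeff)) :=
      hTc.comp tendsto_neg_atBot_atTop
    refine hcomp.congr (fun x => ?_)
    rw [hPceval, hQceval, neg_neg]
  have hlc_pos : 0 < P.leadingCoeff := by
    have hge : 0 ≤ P.leadingCoeff :=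
      ge_of_tendsto hT (Eventually.of_forall fun x => le_of_lt (div_pos (hpos x) (hQpos x)))
    exact lt_of_le_of_ne hge (fun h => (leadingCoeff_ne_zero.mpr hP0) h.symm)
  set L := P.leadingCoeff with hL
  have hmem : Ioo (L / 2) (L + 1) ∈ 𝓝 L := Ioo_mem_nhds (by linarith) (by linarith)
  obtain ⟨a, ha⟩ := (eventually_atTop).mp (hT hmem)
  obtain ⟨b, hb⟩ := (eventually_atBot).mp (hB hmem)
  set R : ℝ → ℝ := fun x => P.eval x / Q.eval x with hR
  have hRcont : Continuous R := by
    apply (P.continuous_aeval).div (Q.continuous_aeval)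
    intro x; exact ne_of_gt (hQpos x)
  have hRpos : ∀ x, 0 < R x := fun x => div_pos (hpos x) (hQpos x)
  set lo := min a b with hlo
  set hi := max a b with hhi
  have hKne : (Icc lo hi).Nonempty := ⟨lo, le_refl _, min_le_max⟩
  obtain ⟨xm, hxm, hxmin⟩ := isCompact_Icc.exists_isMinOn hKne hRcont.continuousOn
  obtain ⟨xM, hxM, hxmax⟩ := isCompact_Icc.exists_isMaxOn hKne hRcont.continuousOn
  refine ⟨min (L / 2) (R xm), max (L + 1) (R xM), lt_min (by linarith) (hRpos xm),
    lt_of_lt_of_le (by linarith) (le_max_left _ _), fun t => ?_⟩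
  have hbnd : min (L / 2) (R xm) ≤ R t ∧ R t ≤ max (L + 1) (R xM) := by
    rcases le_or_gt t hi with h1 | h1
    · rcases le_or_gt lo t with h2 | h2
      · exact ⟨le_trans (min_le_right _ _) (hxmin ⟨h2, h1⟩),
          le_trans (hxmax ⟨h2, h1⟩) (le_max_right _ _)⟩
      · have hz : t ≤ b := le_of_lt (lt_of_lt_of_le h2 (min_le_right a b))
        have := hb t hz
        exact ⟨le_trans (min_le_left _ _) (le_of_lt this.1),
          le_trans (le_of_lt this.2) (le_max_left _ _)⟩
    · have hz : a ≤ t := le_of_lt (lt_of_le_of_lt (le_max_left a b) h1)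
      have := ha t hz
      exact ⟨le_trans (min_le_left _ _) (le_of_lt this.1),
        le_trans (le_of_lt this.2) (le_max_left _ _)⟩
  have hQt := hQpos t
  have hQte := hQeval t
  constructor
  · have := (le_div_iff₀ hQt).mp hbnd.1
    rw [hQte] at this; linarith
  · have := (div_le_iff₀ hQt).mp hbnd.2
    rw [hQte] at this; linarith



lemma polyMult_eq_rootMultiplicity (p : Polynomial ℝ) (t₀ : ℝ) (hp : p.natDegree ≠ 0) :
    polyMult p t₀ = (p - C (p.eval t₀)).rootMultiplicity t₀ := by
  set r := p - C (p.eval t₀) with hr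
  have hr0 : r ≠ 0 := by
    intro h
    have : p.natDegree = 0 := by
      have := natDegree_sub_C (p := p) (a := p.eval t₀)
      rw [← hr, h, natDegree_zero] at this; omega
    exact hp this
  have hroot : r.IsRoot t₀ := by simp [hr, IsRoot]
  have hiter : ∀ j : ℕ, 1 ≤ j → derivative^[j] r = derivative^[j] p := by
    intro j hj
    obtain ⟨i, rfl⟩ := Nat.exists_eq_add_of_le hj
    rw [add_comm, Function.iterate_add_apply, Function.iterate_add_apply]
    congr 1
    simp [hr]
  set m := r.rootMultiplicity t₀ with hm
  have hm1 : 1 ≤ m := (rootMultiplicity_pos hr0).mpr hroot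
  have hmne : (derivative^[m] p).eval t₀ ≠ 0 := by
    intro h0
    have hall : ∀ j ≤ m, (derivative^[j] r).IsRoot t₀ := by
      intro j hj
      rcases lt_or_eq_of_le hj with hlt | rfl
      · exact isRoot_iterate_derivative_of_lt_rootMultiplicity hlt
      · rw [hiter m hm1]; exact h0
    have := lt_rootMultiplicity_of_isRoot_iterate_derivative hr0 hall
    omega
  have hmem : m ∈ {k : ℕ | 1 ≤ k ∧ (derivative^[k] p).eval t₀ ≠ 0} := ⟨hm1, hmne⟩
  apply le_antisymm
  · exact Nat.sInf_le hmem
  · apply le_csInf ⟨m, hmem⟩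
    intro j hj
    by_contra hlt
    push_neg at hlt
    have : (derivative^[j] r).IsRoot t₀ := isRoot_iterate_derivative_of_lt_rootMultiplicity hlt
    rw [hiter j hj.1] at this
    exact hj.2 this



lemma poly_ne_zero_of_natDegree_ne_zero {p : Polynomial ℝ} (h : p.natDegree ≠ 0) : p ≠ 0 :=
  fun h0 => h (by rw [h0, natDegree_zero])

lemma poly_degree_pos_of_natDegree_ne_zero {p : Polynomial ℝ} (h : p.natDegree ≠ 0) :
    0 < p.degree := by
  rw [Polynomial.degree_eq_natDegree (poly_ne_zero_of_natDegree_ne_zero h)]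
  exact_mod_cast Nat.pos_of_ne_zero h

lemma unbounded_right (p : Polynomial ℝ) (hndeg : p.natDegree ≠ 0) (t₀ : ℝ)
    (hmin : ∀ t : ℝ, p.eval t₀ ≤ p.eval t) :
    ∀ M x₀ : ℝ, ∃ x, x₀ ≤ x ∧ M ≤ p.eval x := by
  intro M x₀
  have habs := Polynomial.abs_tendsto_atTop p (poly_degree_pos_of_natDegree_ne_zero hndeg)
  have h1 : ∀ᶠ x in atTop, |M| + |p.eval t₀| + 1 ≤ |p.eval x| :=
    habs.eventually_ge_atTop _
  have h2 : ∀ᶠ x : ℝ in atTop, x₀ ≤ x := eventually_ge_atTop x₀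
  obtain ⟨x, hx1, hx2⟩ := (h1.and h2).exists
  refine ⟨x, hx2, ?_⟩
  rcases abs_cases (p.eval x) with ⟨he, _⟩ | ⟨he, _⟩
  · rw [he] at hx1
    have : M ≤ |M| := le_abs_self M
    have := abs_nonneg (p.eval t₀)
    linarith
  · exfalso
    have h0 := hmin x
    have h3 : -(p.eval t₀) ≤ |p.eval t₀| := neg_le_abs _
    have h4 : (0:ℝ) ≤ |M| := abs_nonneg M
    rw [he] at hx1
    linarith

lemma unbounded_left (p : Polynomial ℝ) (hndeg : p.natDegree ≠ 0) (t₀ : ℝ)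
    (hmin : ∀ t : ℝ, p.eval t₀ ≤ p.eval t) :
    ∀ M x₀ : ℝ, ∃ x, x ≤ x₀ ∧ M ≤ p.eval x := by
  intro M x₀
  set Pc := p.comp (-X : Polynomial ℝ) with hPc
  have hXdeg : (-X : Polynomial ℝ).natDegree = 1 := by rw [natDegree_neg, natDegree_X]
  have hPceval : ∀ x : ℝ, Pc.eval x = p.eval (-x) := by intro x; simp [hPc, eval_comp]
  have hPcdeg : Pc.natDegree = p.natDegree := by rw [hPc, natDegree_comp, hXdeg, mul_one]
  have hPcmin : ∀ t : ℝ, Pc.eval (-t₀) ≤ Pc.eval t := by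
    intro t; rw [hPceval, hPceval, neg_neg]; exact hmin (-t)
  obtain ⟨x, hx1, hx2⟩ := unbounded_right Pc (by rw [hPcdeg]; exact hndeg) (-t₀)
    hPcmin M (-x₀)
  exact ⟨-x, by linarith, by rw [hPceval] at hx2; exact hx2⟩

lemma min_structure (p : Polynomial ℝ) (t₀ : ℝ) (hndeg : p.natDegree ≠ 0)
    (hpt : {t : ℝ | (Polynomial.derivative p).eval t = 0} = {t₀})
    (hmin : ∀ t : ℝ, p.eval t₀ ≤ p.eval t) :
    (∀ t : ℝ, t₀ < t → 0 < (derivative p).eval t) ∧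
    (∀ t : ℝ, t < t₀ → (derivative p).eval t < 0) ∧
    StrictMonoOn p.eval (Ici t₀) ∧ StrictAntiOn p.eval (Iic t₀) ∧
    (∀ t : ℝ, t ≠ t₀ → p.eval t₀ < p.eval t) ∧
    (∀ y : ℝ, p.eval t₀ ≤ y → ∃ t, t₀ ≤ t ∧ p.eval t = y) ∧
    (∀ y : ℝ, p.eval t₀ ≤ y → ∃ t, t ≤ t₀ ∧ p.eval t = y) := by
  have hne : ∀ t : ℝ, t ≠ t₀ → (derivative p).eval t ≠ 0 := by
    intro t ht h
    apply ht
    have h2 : t ∈ {t : ℝ | (derivative p).eval t = 0} := h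
    rw [hpt] at h2
    exact h2
  have hcont : Continuous fun x : ℝ => (derivative p).eval x := p.derivative.continuous
  -- constant sign on each side
  have hsame : ∀ t₁ t₂ : ℝ, t₁ ≠ t₀ → t₂ ≠ t₀ → (t₀ < t₁ ↔ t₀ < t₂) →
      ((derivative p).eval t₁ < 0 → (derivative p).eval t₂ < 0) := by
    intro t₁ t₂ h1 h2 hside hneg
    by_contra hcon
    push_neg at hcon
    have hpos2 : 0 < (derivative p).eval t₂ := lt_of_le_of_ne hcon (fun h => (hne t₂ h2) h.symm)
    have h0 : (0:ℝ) ∈ uIcc ((derivative p).eval t₁) ((derivative p).eval t₂) := by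
      rw [Set.mem_uIcc]; left; exact ⟨le_of_lt hneg, le_of_lt hpos2⟩
    obtain ⟨z, hz, hz0⟩ := intermediate_value_uIcc (hcont.continuousOn) h0
    have hzt : z = t₀ := by
      by_contra h; exact hne z h hz0
    rw [Set.mem_uIcc, hzt] at hz
    rcases lt_or_ge t₀ t₁ with ha | ha
    · have hb : t₀ < t₂ := hside.mp ha
      rcases hz with ⟨hc, _⟩ | ⟨hc, _⟩ <;> linarith
    · have ha' : t₁ < t₀ := lt_of_le_of_ne ha h1
      have hb : ¬ t₀ < t₂ := fun h => absurd (hside.mpr h) (not_lt.mpr ha)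
      push_neg at hb
      have hb' : t₂ < t₀ := lt_of_le_of_ne hb h2
      rcases hz with ⟨_, hc⟩ | ⟨_, hc⟩ <;> linarith
  -- derivative positive on the right
  have hposR : ∀ t : ℝ, t₀ < t → 0 < (derivative p).eval t := by
    by_contra hcon
    push_neg at hcon
    obtain ⟨t₁, ht₁, hle⟩ := hcon
    have hneg1 : (derivative p).eval t₁ < 0 := lt_of_le_of_ne hle (hne t₁ (ne_of_gt ht₁))
    have hnegall : ∀ t : ℝ, t₀ < t → (derivative p).eval t < 0 := by
      intro t ht
      exact hsame t₁ t (ne_of_gt ht₁) (ne_of_gt ht) (by constructor <;> intro <;> assumption) hneg1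
    have hanti : StrictAntiOn p.eval (Ici t₀) := by
      apply strictAntiOn_of_deriv_neg (convex_Ici t₀) (p.continuous).continuousOn
      intro x hx
      rw [interior_Ici] at hx
      rw [Polynomial.deriv]
      exact hnegall x hx
    have := hanti (le_refl t₀ : t₀ ∈ Ici t₀) (by simp : t₀ + 1 ∈ Ici t₀) (by linarith)
    linarith [hmin (t₀ + 1)]
  have hnegL : ∀ t : ℝ, t < t₀ → (derivative p).eval t < 0 := by
    by_contra hcon
    push_neg at hcon
    obtain ⟨t₁, ht₁, hle⟩ := hcon
    have hpos1 : 0 < (derivative p).eval t₁ := lt_of_le_of_ne hle (fun h => hne t₁ (ne_of_lt ht₁) h.symm)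
    have hposall : ∀ t : ℝ, t < t₀ → 0 < (derivative p).eval t := by
      intro t ht
      by_contra hc
      push_neg at hc
      have hnegt : (derivative p).eval t < 0 := lt_of_le_of_ne hc (hne t (ne_of_lt ht))
      have := hsame t t₁ (ne_of_lt ht) (ne_of_lt ht₁)
        (by constructor <;> intro h <;> linarith) hnegt
      linarith
    have hmono : StrictMonoOn p.eval (Iic t₀) := by
      apply strictMonoOn_of_deriv_pos (convex_Iic t₀) (p.continuous).continuousOn
      intro x hx
      rw [interior_Iic] at hx
      rw [Polynomial.deriv]
      exact hposall x hx
    have := hmono (by simp : t₀ - 1 ∈ Iic t₀) (le_refl t₀ : t₀ ∈ Iic t₀) (by linarith)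
    linarith [hmin (t₀ - 1)]
  have hmono : StrictMonoOn p.eval (Ici t₀) := by
    apply strictMonoOn_of_deriv_pos (convex_Ici t₀) (p.continuous).continuousOn
    intro x hx
    rw [interior_Ici] at hx
    rw [Polynomial.deriv]
    exact hposR x hx
  have hanti : StrictAntiOn p.eval (Iic t₀) := by
    apply strictAntiOn_of_deriv_neg (convex_Iic t₀) (p.continuous).continuousOn
    intro x hx
    rw [interior_Iic] at hx
    rw [Polynomial.deriv]
    exact hnegL x hx
  have hsmin : ∀ t : ℝ, t ≠ t₀ → p.eval t₀ < p.eval t := by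
    intro t ht
    rcases lt_or_gt_of_ne ht with h | h
    · exact hanti (le_of_lt h : t ∈ Iic t₀) (le_refl t₀) h
    · exact hmono (le_refl t₀) (le_of_lt h : t ∈ Ici t₀) h
  refine ⟨hposR, hnegL, hmono, hanti, hsmin, ?_, ?_⟩
  · intro y hy
    obtain ⟨x, hx1, hx2⟩ := unbounded_right p hndeg t₀ hmin y t₀
    have hsub := intermediate_value_Icc hx1 (p.continuous).continuousOn
    have hyin : y ∈ Icc (p.eval t₀) (p.eval x) := ⟨hy, hx2⟩
    obtain ⟨t, ht, hteq⟩ := hsub hyin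
    exact ⟨t, ht.1, hteq⟩
  · intro y hy
    obtain ⟨x, hx1, hx2⟩ := unbounded_left p hndeg t₀ hmin y t₀
    have hsub := intermediate_value_Icc' hx1 (p.continuous).continuousOn
    have hyin : y ∈ Icc (p.eval t₀) (p.eval x) := ⟨hy, hx2⟩
    obtain ⟨t, ht, hteq⟩ := hsub hyin
    exact ⟨t, ht.2, hteq⟩



lemma min_factor (p : Polynomial ℝ) (t₀ : ℝ) (d k : ℕ) (hd : 2 ≤ d) (hdeven : Even d)
    (hpd : p.natDegree = d)
    (hk : polyMult p t₀ = k)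
    (hd'0 : (Polynomial.derivative p).eval t₀ = 0)
    (hsmin : ∀ t : ℝ, t ≠ t₀ → p.eval t₀ < p.eval t)
    (hposR : ∀ t : ℝ, t₀ < t → 0 < (Polynomial.derivative p).eval t)
    (hnegL : ∀ t : ℝ, t < t₀ → (Polynomial.derivative p).eval t < 0) :
    ∃ (U W : Polynomial ℝ) (e : ℕ),
      (∀ t : ℝ, p.eval t - p.eval t₀ = (t - t₀) ^ k * U.eval t) ∧
      (∀ t : ℝ, (Polynomial.derivative p).eval t = (t - t₀) ^ (k - 1) * W.eval t) ∧
      (∀ t : ℝ, 0 < U.eval t) ∧ (∀ t : ℝ, 0 < W.eval t) ∧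
      U.natDegree = 2 * e ∧ W.natDegree = 2 * e ∧
      2 ≤ k ∧ Even k ∧ k + 2 * e = d := by
  have hndeg : p.natDegree ≠ 0 := by omega
  have hp0 : p ≠ 0 := fun h => hndeg (by rw [h, natDegree_zero])
  set r : Polynomial ℝ := p - C (p.eval t₀) with hr
  have hrdeg : r.natDegree = d := by rw [hr, natDegree_sub_C, hpd]
  have hr0 : r ≠ 0 := fun h => by rw [h, natDegree_zero] at hrdeg; omega
  have hkrm : k = r.rootMultiplicity t₀ := by
    rw [← hk, polyMult_eq_rootMultiplicity p t₀ hndeg]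
  have hk2 : 2 ≤ k := by
    have h1 : 1 < r.rootMultiplicity t₀ := by
      rw [one_lt_rootMultiplicity_iff_isRoot hr0]
      constructor
      · simp [hr, IsRoot]
      · have : derivative r = derivative p := by simp [hr]
        rw [IsRoot, this]; exact hd'0
    omega
  set U : Polynomial ℝ := r /ₘ (X - C t₀) ^ k with hU
  have hfact : (X - C t₀) ^ k * U = r := by
    rw [hU, hkrm]; exact r.pow_mul_divByMonic_rootMultiplicity_eq t₀
  have hU0 : U.eval t₀ ≠ 0 := by
    rw [hU, hkrm]; exact eval_divByMonic_pow_rootMultiplicity_ne_zero t₀ hr0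
  have hUne : U ≠ 0 := fun h => hU0 (by rw [h, eval_zero])
  have hUeval : ∀ t : ℝ, p.eval t - p.eval t₀ = (t - t₀) ^ k * U.eval t := by
    intro t
    have := congrArg (eval t) hfact
    simpa [hr] using this.symm
  have hpowne : ((X - C t₀) ^ k : Polynomial ℝ) ≠ 0 := pow_ne_zero _ (X_sub_C_ne_zero t₀)
  have hUdeg' : k + U.natDegree = d := by
    have := natDegree_mul hpowne hUne
    rw [hfact, hrdeg, (monic_X_sub_C t₀).natDegree_pow, natDegree_X_sub_C, mul_one] at this
    omega
  have hkd : k ≤ d := by omega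
  -- the polynomial W
  set W : Polynomial ℝ := C (k : ℝ) * U + (X - C t₀) * Polynomial.derivative U with hW
  have hj : k = (k - 1) + 1 := by omega
  have hWfact : Polynomial.derivative p = (X - C t₀) ^ (k - 1) * W := by
    have h1 : Polynomial.derivative p = Polynomial.derivative r := by simp [hr]
    rw [h1, ← hfact, derivative_mul, derivative_pow, derivative_X_sub_C, hW]
    rw [show ((X - C t₀ : Polynomial ℝ) ^ k) = (X - C t₀) ^ ((k-1)+1) from by rw [← hj]]
    have hc : ((k : ℕ) : ℝ[X]) = C (k : ℝ) := by
      simp [Polynomial.C_eq_natCast]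
    rw [pow_succ]
    ring
  have hWeval : ∀ t : ℝ, (Polynomial.derivative p).eval t = (t - t₀) ^ (k - 1) * W.eval t := by
    intro t
    have := congrArg (eval t) hWfact
    simpa using this
  have hWt₀ : W.eval t₀ = (k : ℝ) * U.eval t₀ := by simp [hW]
  have hWne : W ≠ 0 := by
    intro h
    rw [h, eval_zero] at hWt₀
    have : (k : ℝ) ≠ 0 := Nat.cast_ne_zero.mpr (by omega)
    exact hU0 (by
      rcases mul_eq_zero.mp hWt₀.symm with h1 | h1
      · exact absurd h1 this
      · exact h1)
  -- sign of U at t₀ and parity of k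
  have hnear : ∀ δ : ℝ, 0 < δ → (∀ x : ℝ, |x - t₀| < δ → (0 < U.eval t₀ → 0 < U.eval x) ∧
      (U.eval t₀ < 0 → U.eval x < 0)) → True := fun _ _ _ => trivial
  have hUt₀pos : 0 < U.eval t₀ := by
    rcases lt_or_gt_of_ne hU0 with hneg | hpos
    · exfalso
      have hcontU : ContinuousAt (fun x => U.eval x) t₀ := U.continuous.continuousAt
      have hmem : Iio (0:ℝ) ∈ 𝓝 (U.eval t₀) := Iio_mem_nhds hneg
      obtain ⟨ε, hε, hball⟩ := Metric.mem_nhds_iff.mp (hcontU.preimage_mem_nhds hmem)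
      set x := t₀ + ε / 2 with hx
      have hxball : x ∈ Metric.ball t₀ ε := by
        rw [Metric.mem_ball, Real.dist_eq, hx]
        rw [show t₀ + ε / 2 - t₀ = ε / 2 from by ring, abs_of_pos (by linarith)]
        linarith
      have hUx : U.eval x < 0 := hball hxball
      have hxt : t₀ < x := by rw [hx]; linarith
      have h1 := hsmin x (ne_of_gt hxt)
      have h2 := hUeval x
      have h3 : (0:ℝ) < (x - t₀) ^ k := pow_pos (by linarith) k
      nlinarith
    · exact hpos
  have hkeven : Even k := by
    rcases Nat.even_or_odd k with h | hodd
    · exact h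
    exfalso
    have hcontU : ContinuousAt (fun x => U.eval x) t₀ := U.continuous.continuousAt
    have hmem : Ioi (0:ℝ) ∈ 𝓝 (U.eval t₀) := Ioi_mem_nhds hUt₀pos
    obtain ⟨ε, hε, hball⟩ := Metric.mem_nhds_iff.mp (hcontU.preimage_mem_nhds hmem)
    set x := t₀ - ε / 2 with hx
    have hxball : x ∈ Metric.ball t₀ ε := by
      rw [Metric.mem_ball, Real.dist_eq, hx]
      rw [show t₀ - ε / 2 - t₀ = -(ε / 2) from by ring, abs_neg, abs_of_pos (by linarith)]
      linarith
    have hUx : 0 < U.eval x := hball hxball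
    have hxt : x < t₀ := by rw [hx]; linarith
    have h1 := hsmin x (ne_of_lt hxt)
    have h2 := hUeval x
    have h3 : (x - t₀) ^ k < 0 := Odd.pow_neg hodd (by linarith)
    nlinarith
  have hUpos : ∀ t : ℝ, 0 < U.eval t := by
    intro t
    rcases eq_or_ne t t₀ with rfl | ht
    · exact hUt₀pos
    · have h1 := hsmin t ht
      have h2 := hUeval t
      have h3 : (0:ℝ) < (t - t₀) ^ k := Even.pow_pos hkeven (sub_ne_zero.mpr ht)
      nlinarith
  have hk1odd : Odd (k - 1) := Nat.Even.sub_odd (by omega) hkeven odd_one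
  have hWpos : ∀ t : ℝ, 0 < W.eval t := by
    intro t
    rcases lt_trichotomy t t₀ with h | rfl | h
    · have h1 := hnegL t h
      have h2 := hWeval t
      have h3 : (t - t₀) ^ (k - 1) < 0 := Odd.pow_neg hk1odd (by linarith)
      nlinarith
    · rw [hWt₀]
      have : (0:ℝ) < (k : ℝ) := by exact_mod_cast (by omega : 0 < k)
      exact mul_pos this hUt₀pos
    · have h1 := hposR t h
      have h2 := hWeval t
      have h3 : (0:ℝ) < (t - t₀) ^ (k - 1) := pow_pos (by linarith) _
      nlinarith
  -- degrees
  have hdp : (Polynomial.derivative p).natDegree = d - 1 := by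
    apply natDegree_eq_of_degree_eq_some
    rw [degree_derivative_eq p (by omega : 0 < p.natDegree), hpd]
  have hWdeg : W.natDegree = d - k := by
    have h1 := natDegree_mul (pow_ne_zero (k-1) (X_sub_C_ne_zero t₀)) hWne
    rw [← hWfact, hdp, (monic_X_sub_C t₀).natDegree_pow, natDegree_X_sub_C, mul_one] at h1
    omega
  have hUdeg : U.natDegree = d - k := by omega
  have hdkeven : Even (d - k) := (Nat.even_sub hkd).mpr (by simp [hdeven, hkeven])
  obtain ⟨e, he⟩ := hdkeven
  refine ⟨U, W, e, hUeval, hWeval, hUpos, hWpos, ?_, ?_, hk2, hkeven, ?_⟩ <;> omega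
set_option maxHeartbeats 2000000 in
lemma main_min (d k : ℕ) (hd : 2 ≤ d) (heven : Even d) (p q : Polynomial ℝ)
    (hpd : p.natDegree = d) (hqd : q.natDegree = d) (t₀ s₀ : ℝ)
    (hpt : {t : ℝ | (Polynomial.derivative p).eval t = 0} = {t₀})
    (hqs : {t : ℝ | (Polynomial.derivative q).eval t = 0} = {s₀})
    (hpk : polyMult p t₀ = k) (hqk : polyMult q s₀ = k)
    (c : ℝ) (hc : 0 < c) (hcv : c * p.eval t₀ = q.eval s₀)
    (hminp : ∀ t : ℝ, p.eval t₀ ≤ p.eval t) (hminq : ∀ t : ℝ, q.eval s₀ ≤ q.eval t) :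
    LipEquivPoly p q := by
  have hpnd : p.natDegree ≠ 0 := by omega
  have hqnd : q.natDegree ≠ 0 := by omega
  obtain ⟨pposR, pnegL, pmono, panti, psmin, psurjR, psurjL⟩ :=
    min_structure p t₀ hpnd hpt hminp
  obtain ⟨qposR, qnegL, qmono, qanti, qsmin, qsurjR, qsurjL⟩ :=
    min_structure q s₀ hqnd hqs hminq
  have hp'0 : (Polynomial.derivative p).eval t₀ = 0 := by
    have : t₀ ∈ {t : ℝ | (Polynomial.derivative p).eval t = 0} := by rw [hpt]; rfl
    exact this
  have hq'0 : (Polynomial.derivative q).eval s₀ = 0 := by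
    have : s₀ ∈ {t : ℝ | (Polynomial.derivative q).eval t = 0} := by rw [hqs]; rfl
    exact this
  have hq'ne : ∀ s : ℝ, s ≠ s₀ → (Polynomial.derivative q).eval s ≠ 0 := by
    intro s hs h
    apply hs
    have h2 : s ∈ {t : ℝ | (Polynomial.derivative q).eval t = 0} := h
    rw [hqs] at h2
    exact h2
  obtain ⟨Up, Wp, e, hUpeval, hWpeval, hUppos, hWppos, hUpdeg, hWpdeg, hk2, hkeven, hked⟩ :=
    min_factor p t₀ d k hd heven hpd hpk hp'0 psmin pposR pnegL
  obtain ⟨Uq, Wq, e', hUqeval, hWqeval, hUqpos, hWqpos, hUqdeg, hWqdeg, _, _, hked'⟩ :=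
    min_factor q s₀ d k hd heven hqd hqk hq'0 qsmin qposR qnegL
  have hee : e' = e := by omega
  rw [hee] at hUqdeg hWqdeg
  obtain ⟨a1, a2, ha1, ha2, hUpb⟩ := poly_pos_bound Up e t₀ hUpdeg hUppos
  obtain ⟨b1, b2, hb1, hb2, hWpb⟩ := poly_pos_bound Wp e t₀ hWpdeg hWppos
  obtain ⟨a1', a2', ha1', ha2', hUqb⟩ := poly_pos_bound Uq e s₀ hUqdeg hUqpos
  obtain ⟨b1', b2', hb1', hb2', hWqb⟩ := poly_pos_bound Wq e s₀ hWqdeg hWqpos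
  have hk1 : 1 ≤ k := by omega
  -- construction of φ
  have exs : ∀ t : ℝ, ∃ s : ℝ, q.eval s = c * p.eval t ∧ (t₀ < t → s₀ < s) ∧
      (t < t₀ → s < s₀) ∧ (t = t₀ → s = s₀) := by
    intro t
    rcases lt_trichotomy t t₀ with h | h | h
    · have h1 : q.eval s₀ < c * p.eval t := by
        rw [← hcv]
        exact (mul_lt_mul_iff_right₀ hc).mpr (psmin t (ne_of_lt h))
      obtain ⟨s, hs1, hs2⟩ := qsurjL (c * p.eval t) (le_of_lt h1)
      have hss : s ≠ s₀ := by
        intro h2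
        rw [h2] at hs2
        rw [hs2] at h1
        exact lt_irrefl _ h1
      exact ⟨s, hs2, fun h2 => absurd h2 (by linarith), fun _ => lt_of_le_of_ne hs1 hss,
        fun h2 => absurd h2 (by linarith)⟩
    · exact ⟨s₀, by rw [h, hcv], fun h2 => absurd h2 (by linarith),
        fun h2 => absurd h2 (by linarith), fun _ => rfl⟩
    · have h1 : q.eval s₀ < c * p.eval t := by
        rw [← hcv]
        exact (mul_lt_mul_iff_right₀ hc).mpr (psmin t (ne_of_gt h))
      obtain ⟨s, hs1, hs2⟩ := qsurjR (c * p.eval t) (le_of_lt h1)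
      have hss : s ≠ s₀ := by
        intro h2
        rw [h2] at hs2
        rw [hs2] at h1
        exact lt_irrefl _ h1
      exact ⟨s, hs2, fun _ => lt_of_le_of_ne hs1 (Ne.symm hss),
        fun h2 => absurd h2 (by linarith), fun h2 => absurd h2 (by linarith)⟩
  set φ : ℝ → ℝ := fun t => (exs t).choose with hφdef
  have hφq : ∀ t : ℝ, q.eval (φ t) = c * p.eval t := fun t => (exs t).choose_spec.1
  have hφR : ∀ t : ℝ, t₀ < t → s₀ < φ t := fun t => (exs t).choose_spec.2.1
  have hφL : ∀ t : ℝ, t < t₀ → φ t < s₀ := fun t => (exs t).choose_spec.2.2.1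
  have hφ0 : φ t₀ = s₀ := (exs t₀).choose_spec.2.2.2 rfl
  have hφRge : ∀ t : ℝ, t₀ ≤ t → s₀ ≤ φ t := by
    intro t ht
    rcases eq_or_lt_of_le ht with rfl | h
    · rw [hφ0]
    · exact le_of_lt (hφR t h)
  have hφLle : ∀ t : ℝ, t ≤ t₀ → φ t ≤ s₀ := by
    intro t ht
    rcases eq_or_lt_of_le ht with rfl | h
    · rw [hφ0]
    · exact le_of_lt (hφL t h)
  -- strict monotonicity of φ
  have hφmono : StrictMono φ := by
    intro t1 t2 h12
    rcases le_or_gt t2 t₀ with h2 | h2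
    · -- both ≤ t₀
      have hq12 : q.eval (φ t2) < q.eval (φ t1) := by
        rw [hφq, hφq]
        exact (mul_lt_mul_iff_right₀ hc).mpr (panti (le_of_lt (lt_of_lt_of_le h12 h2)) h2 h12)
      by_contra hcon
      push_neg at hcon
      rcases eq_or_lt_of_le hcon with he | hlt
      · rw [he] at hq12; exact lt_irrefl _ hq12
      · have := qanti (le_trans (hφLle t2 h2) (le_refl s₀) : φ t2 ∈ Iic s₀)
          (hφLle t1 (le_of_lt (lt_of_lt_of_le h12 h2))) hlt
        linarith
    · rcases le_or_gt t₀ t1 with h1 | h1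
      · -- both ≥ t₀
        have hq12 : q.eval (φ t1) < q.eval (φ t2) := by
          rw [hφq, hφq]
          exact (mul_lt_mul_iff_right₀ hc).mpr (pmono h1 (le_of_lt (lt_of_le_of_lt h1 h12)) h12)
        by_contra hcon
        push_neg at hcon
        rcases eq_or_lt_of_le hcon with he | hlt
        · rw [he] at hq12; exact lt_irrefl _ hq12
        · have := qmono (hφRge t2 (le_of_lt h2)) (hφRge t1 h1) hlt
          linarith
      · -- t1 < t₀ < t2 (or = )
        exact lt_of_lt_of_le (hφL t1 h1) (hφRge t2 (le_of_lt h2))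
  have hφinj : Function.Injective φ := hφmono.injective
  -- surjectivity of φ
  have hφsurj : Function.Surjective φ := by
    intro s
    rcases lt_trichotomy s s₀ with h | h | h
    · have h1 : p.eval t₀ ≤ q.eval s / c := by
        rw [le_div_iff₀ hc]
        have := qsmin s (ne_of_lt h)
        nlinarith [hcv]
      obtain ⟨t, ht1, ht2⟩ := psurjL (q.eval s / c) h1
      have hts : t ≠ t₀ := by
        intro h2
        rw [h2] at ht2
        have : q.eval s = q.eval s₀ := by
          rw [← hcv, ht2]
          field_simp
        have := qsmin s (ne_of_lt h)
        linarith
      have htlt : t < t₀ := lt_of_le_of_ne ht1 hts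
      refine ⟨t, ?_⟩
      have hqeq : q.eval (φ t) = q.eval s := by
        rw [hφq, ht2]
        field_simp
      have h3 : φ t < s₀ := hφL t htlt
      by_contra hcon
      rcases lt_or_gt_of_ne hcon with hlt | hlt
      · have := qanti (le_of_lt h3) (le_of_lt h) hlt
        · linarith
      · have := qanti (le_of_lt h) (le_of_lt h3) hlt
        linarith
    · exact ⟨t₀, by rw [hφ0, h]⟩
    · have h1 : p.eval t₀ ≤ q.eval s / c := by
        rw [le_div_iff₀ hc]
        have := qsmin s (ne_of_gt h)
        nlinarith [hcv]
      obtain ⟨t, ht1, ht2⟩ := psurjR (q.eval s / c) h1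
      have hts : t ≠ t₀ := by
        intro h2
        rw [h2] at ht2
        have : q.eval s = q.eval s₀ := by
          rw [← hcv, ht2]
          field_simp
        have := qsmin s (ne_of_gt h)
        linarith
      have htlt : t₀ < t := lt_of_le_of_ne ht1 (Ne.symm hts)
      refine ⟨t, ?_⟩
      have hqeq : q.eval (φ t) = q.eval s := by
        rw [hφq, ht2]
        field_simp
      have h3 : s₀ < φ t := hφR t htlt
      by_contra hcon
      rcases lt_or_gt_of_ne hcon with hlt | hlt
      · have := qmono (le_of_lt h3) (le_of_lt h) hlt
        linarith
      · have := qmono (le_of_lt h) (le_of_lt h3) hlt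
        linarith
  -- continuity of φ
  have hφcont : Continuous φ := by
    have := (StrictMono.orderIsoOfSurjective φ hφmono hφsurj).continuous
    have hcoe : ⇑(StrictMono.orderIsoOfSurjective φ hφmono hφsurj) = φ :=
      StrictMono.coe_orderIsoOfSurjective φ hφmono hφsurj
    rwa [hcoe] at this
  -- branch relation
  have h_rel : ∀ t : ℝ, c * ((t - t₀) ^ k * Up.eval t) = (φ t - s₀) ^ k * Uq.eval (φ t) := by
    intro t
    have h1 := hUpeval t
    have h2 := hUqeval (φ t)
    have h4 : c * (p.eval t - p.eval t₀) = q.eval (φ t) - q.eval s₀ := by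
      rw [hφq t, ← hcv]; ring
    rw [← h1, h4, h2]
  -- sigma bounds
  set m : ℝ := min 1 (c * a1 / a2') with hmdef
  set M : ℝ := max 1 (c * a2 / a1') with hMdef
  have hm0 : 0 < m := lt_min one_pos (by positivity)
  have hM0 : 0 < M := lt_of_lt_of_le one_pos (le_max_left _ _)
  have hsigma : ∀ t : ℝ, t ≠ t₀ →
      m * |t - t₀| ≤ |φ t - s₀| ∧ |φ t - s₀| ≤ M * |t - t₀| := by
    intro t ht
    set a := |t - t₀| with hadef
    set b := |φ t - s₀| with hbdef
    have ha : 0 < a := abs_pos.mpr (sub_ne_zero.mpr ht)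
    have hb : 0 ≤ b := abs_nonneg _
    have hak : a ^ k = (t - t₀) ^ k := Even.pow_abs hkeven _
    have hbk : b ^ k = (φ t - s₀) ^ k := Even.pow_abs hkeven _
    have ha2 : a ^ 2 = (t - t₀) ^ 2 := sq_abs _
    have hb2 : b ^ 2 = (φ t - s₀) ^ 2 := sq_abs _
    have hrel := h_rel t
    have hUp1 := (hUpb t).1
    have hUp2 := (hUpb t).2
    have hUq1 := (hUqb (φ t)).1
    have hUq2 := (hUqb (φ t)).2
    rw [← ha2] at hUp1 hUp2
    rw [← hb2] at hUq1 hUq2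
    rw [← hak, ← hbk] at hrel
    have hga : (0:ℝ) < (a ^ 2 + 1) ^ e := by positivity
    have hgb : (0:ℝ) < (b ^ 2 + 1) ^ e := by positivity
    have hbknn : (0:ℝ) ≤ b ^ k := pow_nonneg hb k
    have hakpos : (0:ℝ) < a ^ k := pow_pos ha k
    constructor
    · apply hfun_lb hk1 (by positivity) hb ha
      rw [div_mul_eq_mul_div, div_le_iff₀ ha2']
      have e1 : c * a ^ k * (a1 * (a ^ 2 + 1) ^ e) ≤ c * a ^ k * Up.eval t :=
        mul_le_mul_of_nonneg_left hUp1 (by positivity)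
      have e2 : b ^ k * Uq.eval (φ t) ≤ b ^ k * (a2' * (b ^ 2 + 1) ^ e) :=
        mul_le_mul_of_nonneg_left hUq2 hbknn
      nlinarith [e1, e2, hrel]
    · apply hfun_ub hk1 (by positivity) hb ha
      rw [div_mul_eq_mul_div, le_div_iff₀ ha1']
      have e1 : c * a ^ k * Up.eval t ≤ c * a ^ k * (a2 * (a ^ 2 + 1) ^ e) :=
        mul_le_mul_of_nonneg_left hUp2 (by positivity)
      have e2 : b ^ k * (a1' * (b ^ 2 + 1) ^ e) ≤ b ^ k * Uq.eval (φ t) :=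
        mul_le_mul_of_nonneg_left hUq1 hbknn
      nlinarith [e1, e2, hrel]
  have hφne : ∀ t : ℝ, t ≠ t₀ → φ t ≠ s₀ := by
    intro t ht
    rcases lt_or_gt_of_ne ht with h | h
    · exact ne_of_lt (hφL t h)
    · exact ne_of_gt (hφR t h)
  -- derivative of φ
  set D : ℝ → ℝ := fun x =>
    c * (Polynomial.derivative p).eval x / (Polynomial.derivative q).eval (φ x) with hDdef
  have hder : ∀ t : ℝ, t ≠ t₀ → HasDerivAt φ (D t) t := by
    intro t ht
    have hq' : (Polynomial.derivative q).eval (φ t) ≠ 0 := hq'ne _ (hφne t ht)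
    have h1 : Tendsto φ (𝓝[≠] t) (𝓝[≠] (φ t)) := by
      rw [tendsto_nhdsWithin_iff]
      constructor
      · exact (hφcont.tendsto t).mono_left nhdsWithin_le_nhds
      · refine eventually_mem_nhdsWithin.mono (fun x hx => ?_)
        exact hφinj.ne hx
    have h2 : Tendsto (fun x => slope (fun y => q.eval y) (φ t) (φ x)) (𝓝[≠] t)
        (𝓝 ((Polynomial.derivative q).eval (φ t))) :=
      (hasDerivAt_iff_tendsto_slope.mp (q.hasDerivAt (φ t))).comp h1
    have h3 : HasDerivAt (fun x => c * p.eval x) (c * (Polynomial.derivative p).eval t) t :=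
      (p.hasDerivAt t).const_mul c
    have h4 := hasDerivAt_iff_tendsto_slope.mp h3
    have h5 : Tendsto (fun x => slope (fun y => c * p.eval y) t x /
        slope (fun y => q.eval y) (φ t) (φ x)) (𝓝[≠] t) (𝓝 (D t)) := h4.div h2 hq'
    rw [hasDerivAt_iff_tendsto_slope]
    apply Filter.Tendsto.congr' _ h5
    have hsame : ∀ᶠ x in 𝓝[≠] t, ((t₀ < x ∧ t₀ < t) ∨ (x < t₀ ∧ t < t₀)) ∧ x ≠ t := by
      rcases lt_or_gt_of_ne ht with h | h
      · have hmem : Iio t₀ ∈ 𝓝 t := Iio_mem_nhds h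
        filter_upwards [nhdsWithin_le_nhds hmem, eventually_mem_nhdsWithin] with x hx hx'
        exact ⟨Or.inr ⟨hx, h⟩, hx'⟩
      · have hmem : Ioi t₀ ∈ 𝓝 t := Ioi_mem_nhds h
        filter_upwards [nhdsWithin_le_nhds hmem, eventually_mem_nhdsWithin] with x hx hx'
        exact ⟨Or.inl ⟨hx, h⟩, hx'⟩
    filter_upwards [hsame] with x hx
    obtain ⟨hside, hxt⟩ := hx
    have hpne : p.eval x ≠ p.eval t := by
      rcases hside with ⟨h1', h2'⟩ | ⟨h1', h2'⟩
      · intro heq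
        exact hxt (pmono.injOn (le_of_lt h1' : x ∈ Ici t₀) (le_of_lt h2') heq)
      · intro heq
        exact hxt (panti.injOn (le_of_lt h1' : x ∈ Iic t₀) (le_of_lt h2') heq)
    have hφxt : φ x ≠ φ t := hφinj.ne hxt
    have hcne : c * p.eval x - c * p.eval t ≠ 0 := by
      rw [← mul_sub]
      exact mul_ne_zero (ne_of_gt hc) (sub_ne_zero.mpr hpne)
    have hxt' : x - t ≠ 0 := sub_ne_zero.mpr hxt
    have hφxt' : φ x - φ t ≠ 0 := sub_ne_zero.mpr hφxt
    rw [slope_def_field, slope_def_field, slope_def_field, hφq x, hφq t]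
    field_simp
  -- comparison constants
  set A₀ : ℝ := m * (b1 / a2) * (a1' / b2') with hA₀def
  set B₀ : ℝ := M * (b2 / a1) * (a2' / b1') with hB₀def
  have hA₀ : 0 < A₀ := by positivity
  have hB₀ : 0 < B₀ := by positivity
  have hWpUp_ub : ∀ x : ℝ, Wp.eval x ≤ b2 / a1 * Up.eval x := by
    intro x
    have h1 := (hWpb x).2
    have h2 := (hUpb x).1
    rw [div_mul_eq_mul_div, le_div_iff₀ ha1]
    nlinarith [mul_le_mul_of_nonneg_right h1 ha1.le, mul_le_mul_of_nonneg_left h2 hb2.le]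
  have hWpUp_lb : ∀ x : ℝ, b1 / a2 * Up.eval x ≤ Wp.eval x := by
    intro x
    have h1 := (hWpb x).1
    have h2 := (hUpb x).2
    rw [div_mul_eq_mul_div, div_le_iff₀ ha2]
    nlinarith [mul_le_mul_of_nonneg_right h1 ha2.le, mul_le_mul_of_nonneg_left h2 hb1.le]
  have hUqWq_ub : ∀ x : ℝ, Uq.eval x ≤ a2' / b1' * Wq.eval x := by
    intro x
    have h1 := (hUqb x).2
    have h2 := (hWqb x).1
    rw [div_mul_eq_mul_div, le_div_iff₀ hb1']
    nlinarith [mul_le_mul_of_nonneg_right h1 hb1'.le, mul_le_mul_of_nonneg_left h2 ha2'.le]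
  have hUqWq_lb : ∀ x : ℝ, a1' / b2' * Wq.eval x ≤ Uq.eval x := by
    intro x
    have h1 := (hUqb x).1
    have h2 := (hWqb x).2
    rw [div_mul_eq_mul_div, div_le_iff₀ hb2']
    nlinarith [mul_le_mul_of_nonneg_right h1 hb2'.le, mul_le_mul_of_nonneg_left h2 ha1'.le]
  -- key algebraic identity
  have hkk : ∀ x : ℝ, x ^ k = x ^ (k - 1) * x := by
    intro x
    conv_lhs => rw [show k = (k - 1) + 1 from by omega]
    rw [pow_succ]
  have hkey : ∀ t : ℝ,
      c * (Polynomial.derivative p).eval t * ((t - t₀) * Up.eval t * Wq.eval (φ t))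
      = ((φ t - s₀) * Uq.eval (φ t) * Wp.eval t) * (Polynomial.derivative q).eval (φ t) := by
    intro t
    have h3 := h_rel t
    rw [hkk (t - t₀), hkk (φ t - s₀)] at h3
    rw [hWpeval t, hWqeval (φ t)]
    linear_combination (Wp.eval t * Wq.eval (φ t)) * h3
  -- core bound
  have hcore : ∀ (t a b : ℝ), 0 < a → 0 < b →
      (Polynomial.derivative q).eval (φ t) ≠ 0 →
      (c * (Polynomial.derivative p).eval t * (a * Up.eval t * Wq.eval (φ t))
        = (b * Uq.eval (φ t) * Wp.eval t) * (Polynomial.derivative q).eval (φ t)) →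
      m * a ≤ b → b ≤ M * a → A₀ ≤ D t ∧ D t ≤ B₀ := by
    intro t a b ha hb hq' hkey' hσ1 hσ2
    have hUp := hUppos t
    have hWp := hWppos t
    have hUq := hUqpos (φ t)
    have hWq := hWqpos (φ t)
    have hden : 0 < a * Up.eval t * Wq.eval (φ t) := by
      apply mul_pos (mul_pos ha hUp) hWq
    have hDeq : D t = (b * Uq.eval (φ t) * Wp.eval t) / (a * Up.eval t * Wq.eval (φ t)) := by
      rw [div_eq_div_iff hq' (ne_of_gt hden)]
      exact hkey'
    constructor
    · rw [hDeq, le_div_iff₀ hden]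
      have e2 := hWpUp_lb t
      have e3 := hUqWq_lb (φ t)
      have hx2 : 0 ≤ a1' / b2' * Wq.eval (φ t) :=
        mul_nonneg (le_of_lt (div_pos ha1' hb2')) hWq.le
      have hx3 : 0 ≤ b1 / a2 * Up.eval t :=
        mul_nonneg (le_of_lt (div_pos hb1 ha2)) hUp.le
      have hstep1 : (m * a) * (a1' / b2' * Wq.eval (φ t)) ≤ b * Uq.eval (φ t) :=
        mul_le_mul hσ1 e3 hx2 hb.le
      have hstep2 : (m * a) * (a1' / b2' * Wq.eval (φ t)) * (b1 / a2 * Up.eval t)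
          ≤ b * Uq.eval (φ t) * Wp.eval t :=
        mul_le_mul hstep1 e2 hx3 (mul_nonneg hb.le hUq.le)
      nlinarith [hstep2]
    · rw [hDeq, div_le_iff₀ hden]
      have e2 := hWpUp_ub t
      have e3 := hUqWq_ub (φ t)
      have hstep1 : b * Uq.eval (φ t) ≤ (M * a) * (a2' / b1' * Wq.eval (φ t)) :=
        mul_le_mul hσ2 e3 hUq.le (by positivity)
      have hstep2 : b * Uq.eval (φ t) * Wp.eval t
          ≤ (M * a) * (a2' / b1' * Wq.eval (φ t)) * (b2 / a1 * Up.eval t) :=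
        mul_le_mul hstep1 e2 hWp.le
          (mul_nonneg (by positivity) (mul_nonneg (le_of_lt (div_pos ha2' hb1')) hWq.le))
      nlinarith [hstep2]
  have hDbound : ∀ t : ℝ, t ≠ t₀ → A₀ ≤ D t ∧ D t ≤ B₀ := by
    intro t ht
    have hq' := hq'ne _ (hφne t ht)
    obtain ⟨hσ1, hσ2⟩ := hsigma t ht
    rcases lt_or_gt_of_ne ht with hlt | hgt
    · have hφlt : φ t < s₀ := hφL t hlt
      have habs1 : |t - t₀| = t₀ - t := by rw [abs_of_neg (by linarith)]; ring
      have habs2 : |φ t - s₀| = s₀ - φ t := by rw [abs_of_neg (by linarith)]; ring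
      rw [habs1, habs2] at hσ1 hσ2
      refine hcore t (t₀ - t) (s₀ - φ t) (by linarith) (by linarith) hq' ?_ hσ1 hσ2
      linear_combination -(hkey t)
    · have hφgt : s₀ < φ t := hφR t hgt
      have habs1 : |t - t₀| = t - t₀ := abs_of_pos (by linarith)
      have habs2 : |φ t - s₀| = φ t - s₀ := abs_of_pos (by linarith)
      rw [habs1, habs2] at hσ1 hσ2
      exact hcore t (t - t₀) (φ t - s₀) (by linarith) (by linarith) hq' (hkey t) hσ1 hσ2
  -- Lipschitz estimates via MVT
  have hlip1 : ∀ u v : ℝ, u < v → (∀ x, x ∈ Ioo u v → x ≠ t₀) →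
      A₀ * (v - u) ≤ φ v - φ u ∧ φ v - φ u ≤ B₀ * (v - u) := by
    intro u v huv hx
    obtain ⟨ξ, hξ, hslope⟩ := exists_hasDerivAt_eq_slope φ D huv
      (hφcont.continuousOn) (fun x hx' => hder x (hx x hx'))
    have hb := hDbound ξ (hx ξ hξ)
    have hvu : (0:ℝ) < v - u := by linarith
    have heq : φ v - φ u = D ξ * (v - u) := by
      rw [hslope]
      field_simp
    constructor
    · rw [heq]
      exact mul_le_mul_of_nonneg_right hb.1 hvu.le
    · rw [heq]
      exact mul_le_mul_of_nonneg_right hb.2 hvu.le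
  have hlip : ∀ u v : ℝ, u < v →
      A₀ * (v - u) ≤ φ v - φ u ∧ φ v - φ u ≤ B₀ * (v - u) := by
    intro u v huv
    rcases le_or_gt v t₀ with h1 | h1
    · exact hlip1 u v huv (fun x hx => ne_of_lt (lt_of_lt_of_le hx.2 h1))
    · rcases le_or_gt t₀ u with h2 | h2
      · exact hlip1 u v huv (fun x hx => ne_of_gt (lt_of_le_of_lt h2 hx.1))
      · have ha := hlip1 u t₀ h2 (fun x hx => ne_of_lt hx.2)
        have hb := hlip1 t₀ v h1 (fun x hx => ne_of_gt hx.1)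
        constructor <;> [nlinarith [ha.1, hb.1]; nlinarith [ha.2, hb.2]]
  have hbilip : ∀ s t : ℝ, A₀ * |s - t| ≤ |φ s - φ t| ∧ |φ s - φ t| ≤ B₀ * |s - t| := by
    intro s t
    rcases lt_trichotomy s t with h | rfl | h
    · have := hlip s t h
      have h1 : |s - t| = t - s := by rw [abs_of_neg (by linarith)]; ring
      have h2 : |φ s - φ t| = φ t - φ s := by
        rw [abs_of_neg (by linarith [hφmono h])]; ring
      rw [h1, h2]
      exact this
    · simp
    · have := hlip t s h
      have h1 : |s - t| = s - t := abs_of_pos (by linarith)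
      have h2 : |φ s - φ t| = φ s - φ t := abs_of_pos (by linarith [hφmono h])
      rw [h1, h2]
      exact this
  exact ⟨φ, ⟨⟨hφinj, hφsurj⟩, A₀, B₀, hA₀, hB₀, hbilip⟩, c, hc, hφq⟩
lemma poly_exists_signs (r : Polynomial ℝ) (hodd : Odd r.natDegree) :
    (∃ x : ℝ, r.eval x < 0) ∧ (∃ x : ℝ, 0 < r.eval x) := by
  have hnd : r.natDegree ≠ 0 := by
    intro h; rw [h] at hodd; simp [Nat.odd_iff] at hodd
  have hr0 : r ≠ 0 := poly_ne_zero_of_natDegree_ne_zero hnd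
  have hdeg : 0 < r.degree := poly_degree_pos_of_natDegree_ne_zero hnd
  set rc := r.comp (-X : Polynomial ℝ) with hrc
  have hXdeg : (-X : Polynomial ℝ).natDegree = 1 := by rw [natDegree_neg, natDegree_X]
  have hrceval : ∀ x : ℝ, rc.eval x = r.eval (-x) := by intro x; simp [hrc, eval_comp]
  have hrcdeg : rc.natDegree = r.natDegree := by rw [hrc, natDegree_comp, hXdeg, mul_one]
  have hrc0 : rc ≠ 0 := poly_ne_zero_of_natDegree_ne_zero (by rw [hrcdeg]; exact hnd)
  have hrcdeg' : 0 < rc.degree := poly_degree_pos_of_natDegree_ne_zero (by rw [hrcdeg]; exact hnd)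
  have hlcc : rc.leadingCoeff = -r.leadingCoeff := by
    rw [hrc, leadingCoeff_comp (by rw [hXdeg]; norm_num)]
    have h1 : (-X : Polynomial ℝ).leadingCoeff = -1 := by rw [leadingCoeff_neg, leadingCoeff_X]
    rw [h1, Odd.neg_one_pow hodd]
    ring
  rcases lt_or_gt_of_ne (leadingCoeff_ne_zero.mpr hr0) with hlc | hlc
  · -- leading coeff negative : r → -∞ at +∞, rc → +∞ at +∞
    have h1 := r.tendsto_atBot_of_leadingCoeff_nonpos hdeg hlc.le
    have h2 := rc.tendsto_atTop_of_leadingCoeff_nonneg hrcdeg' (by rw [hlcc]; linarith)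
    obtain ⟨x1, hx1⟩ := (h1.eventually_le_atBot (-1)).exists
    obtain ⟨x2, hx2⟩ := (h2.eventually_ge_atTop 1).exists
    exact ⟨⟨x1, by linarith⟩, ⟨-x2, by rw [← hrceval]; linarith⟩⟩
  · have h1 := r.tendsto_atTop_of_leadingCoeff_nonneg hdeg hlc.le
    have h2 := rc.tendsto_atBot_of_leadingCoeff_nonpos hrcdeg' (by rw [hlcc]; linarith)
    obtain ⟨x1, hx1⟩ := (h1.eventually_ge_atTop 1).exists
    obtain ⟨x2, hx2⟩ := (h2.eventually_le_atBot (-1)).exists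
    exact ⟨⟨-x2, by rw [← hrceval]; linarith⟩, ⟨x1, by linarith⟩⟩

lemma deriv_same_sign (p : Polynomial ℝ) (t₀ : ℝ)
    (hpt : {t : ℝ | (Polynomial.derivative p).eval t = 0} = {t₀}) :
    ∀ t₁ t₂ : ℝ, t₁ ≠ t₀ → t₂ ≠ t₀ → (t₀ < t₁ ↔ t₀ < t₂) →
      ((Polynomial.derivative p).eval t₁ < 0 → (Polynomial.derivative p).eval t₂ < 0) := by
  have hne : ∀ t : ℝ, t ≠ t₀ → (derivative p).eval t ≠ 0 := by
    intro t ht h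
    apply ht
    have h2 : t ∈ {t : ℝ | (derivative p).eval t = 0} := h
    rw [hpt] at h2
    exact h2
  have hcont : Continuous fun x : ℝ => (derivative p).eval x := p.derivative.continuous
  intro t₁ t₂ h1 h2 hside hneg
  by_contra hcon
  push_neg at hcon
  have hpos2 : 0 < (derivative p).eval t₂ := lt_of_le_of_ne hcon (fun h => (hne t₂ h2) h.symm)
  have h0 : (0:ℝ) ∈ uIcc ((derivative p).eval t₁) ((derivative p).eval t₂) := by
    rw [Set.mem_uIcc]; left; exact ⟨le_of_lt hneg, le_of_lt hpos2⟩
  obtain ⟨z, hz, hz0⟩ := intermediate_value_uIcc (hcont.continuousOn) h0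
  have hzt : z = t₀ := by
    by_contra h; exact hne z h hz0
  rw [Set.mem_uIcc, hzt] at hz
  rcases lt_or_ge t₀ t₁ with ha | ha
  · have hb : t₀ < t₂ := hside.mp ha
    rcases hz with ⟨hc, _⟩ | ⟨hc, _⟩ <;> linarith
  · have ha' : t₁ < t₀ := lt_of_le_of_ne ha h1
    have hb : ¬ t₀ < t₂ := fun h => absurd (hside.mpr h) (not_lt.mpr ha)
    push_neg at hb
    have hb' : t₂ < t₀ := lt_of_le_of_ne hb h2
    rcases hz with ⟨_, hc⟩ | ⟨_, hc⟩ <;> linarith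

lemma dichotomy (p : Polynomial ℝ) (d : ℕ) (hd : 2 ≤ d) (heven : Even d)
    (hpd : p.natDegree = d) (t₀ : ℝ)
    (hpt : {t : ℝ | (Polynomial.derivative p).eval t = 0} = {t₀}) :
    (∀ t : ℝ, p.eval t₀ ≤ p.eval t) ∨ (∀ t : ℝ, p.eval t ≤ p.eval t₀) := by
  have hne : ∀ t : ℝ, t ≠ t₀ → (derivative p).eval t ≠ 0 := by
    intro t ht h
    apply ht
    have h2 : t ∈ {t : ℝ | (derivative p).eval t = 0} := h
    rw [hpt] at h2
    exact h2
  have hd'deg : (derivative p).natDegree = d - 1 := by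
    apply natDegree_eq_of_degree_eq_some
    rw [degree_derivative_eq p (by omega : 0 < p.natDegree), hpd]
  have hodd : Odd (derivative p).natDegree := by
    rw [hd'deg]
    exact Nat.Even.sub_odd (by omega) heven odd_one
  obtain ⟨⟨x1, hx1⟩, ⟨x2, hx2⟩⟩ := poly_exists_signs (derivative p) hodd
  have hsame := deriv_same_sign p t₀ hpt
  have hp'0 : (derivative p).eval t₀ = 0 := by
    have : t₀ ∈ {t : ℝ | (derivative p).eval t = 0} := by rw [hpt]; rfl
    exact this
  have hx1ne : x1 ≠ t₀ := by intro h; rw [h, hp'0] at hx1; exact lt_irrefl 0 hx1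
  have hx2ne : x2 ≠ t₀ := by intro h; rw [h, hp'0] at hx2; exact lt_irrefl 0 hx2
  rcases lt_or_gt_of_ne hx1ne with hx1L | hx1R
  · -- negative on the left, so positive on the right : minimum
    have hnegall : ∀ t : ℝ, t < t₀ → (derivative p).eval t < 0 := fun t ht =>
      hsame x1 t hx1ne (ne_of_lt ht) (iff_of_false (not_lt.mpr hx1L.le) (not_lt.mpr ht.le)) hx1
    have hx2R : t₀ < x2 := by
      rcases lt_or_gt_of_ne hx2ne with h | h
      · exact absurd (hnegall x2 h) (by linarith)
      · exact h
    have hposall : ∀ t : ℝ, t₀ < t → 0 < (derivative p).eval t := by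
      intro t ht
      by_contra hcon
      push_neg at hcon
      have hneg : (derivative p).eval t < 0 := lt_of_le_of_ne hcon (hne t (ne_of_gt ht))
      have := hsame t x2 (ne_of_gt ht) hx2ne (iff_of_true ht hx2R) hneg
      linarith
    left
    have hmono : StrictMonoOn p.eval (Ici t₀) := by
      apply strictMonoOn_of_deriv_pos (convex_Ici t₀) p.continuous.continuousOn
      intro x hx
      rw [interior_Ici] at hx
      rw [Polynomial.deriv]
      exact hposall x hx
    have hanti : StrictAntiOn p.eval (Iic t₀) := by
      apply strictAntiOn_of_deriv_neg (convex_Iic t₀) p.continuous.continuousOn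
      intro x hx
      rw [interior_Iic] at hx
      rw [Polynomial.deriv]
      exact hnegall x hx
    intro t
    rcases lt_trichotomy t t₀ with h | rfl | h
    · exact (hanti (le_of_lt h : t ∈ Iic t₀) (le_refl t₀ : t₀ ∈ Iic t₀) h).le
    · exact le_refl _
    · exact (hmono (le_refl t₀ : t₀ ∈ Ici t₀) (le_of_lt h : t ∈ Ici t₀) h).le
  · -- negative on the right : maximum
    have hnegall : ∀ t : ℝ, t₀ < t → (derivative p).eval t < 0 := fun t ht =>
      hsame x1 t hx1ne (ne_of_gt ht) (iff_of_true hx1R ht) hx1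
    have hx2L : x2 < t₀ := by
      rcases lt_or_gt_of_ne hx2ne with h | h
      · exact h
      · exact absurd (hnegall x2 h) (by linarith)
    have hposall : ∀ t : ℝ, t < t₀ → 0 < (derivative p).eval t := by
      intro t ht
      by_contra hcon
      push_neg at hcon
      have hneg : (derivative p).eval t < 0 := lt_of_le_of_ne hcon (hne t (ne_of_lt ht))
      have := hsame t x2 (ne_of_lt ht) hx2ne
        (iff_of_false (not_lt.mpr ht.le) (not_lt.mpr hx2L.le)) hneg
      linarith
    right
    have hmono : StrictMonoOn p.eval (Iic t₀) := by
      apply strictMonoOn_of_deriv_pos (convex_Iic t₀) p.continuous.continuousOn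
      intro x hx
      rw [interior_Iic] at hx
      rw [Polynomial.deriv]
      exact hposall x hx
    have hanti : StrictAntiOn p.eval (Ici t₀) := by
      apply strictAntiOn_of_deriv_neg (convex_Ici t₀) p.continuous.continuousOn
      intro x hx
      rw [interior_Ici] at hx
      rw [Polynomial.deriv]
      exact hnegall x hx
    intro t
    rcases lt_trichotomy t t₀ with h | rfl | h
    · exact (hmono (le_of_lt h : t ∈ Iic t₀) (le_refl t₀ : t₀ ∈ Iic t₀) h).le
    · exact le_refl _
    · exact (hanti (le_refl t₀ : t₀ ∈ Ici t₀) (le_of_lt h : t ∈ Ici t₀) h).le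
lemma polyMult_neg (p : Polynomial ℝ) (t : ℝ) : polyMult (-p) t = polyMult p t := by
  unfold polyMult
  congr 1
  ext j
  simp [Polynomial.iterate_derivative_neg]


/-- Polynomial functions of the same even degree d ≥ 2, each with a unique critical
point of the same multiplicity k and critical values of the same sign, are Lipschitz
equivalent iff the critical points are both absolute minima or both absolute maxima. -/
theorem stmt8 (d : ℕ) (hd : 2 ≤ d) (heven : Even d) (p q : Polynomial ℝ)
    (hpd : p.natDegree = d) (hqd : q.natDegree = d)
    (t₀ s₀ : ℝ) (k : ℕ)
    (hpt : {t : ℝ | (Polynomial.derivative p).eval t = 0} = {t₀})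
    (hqs : {t : ℝ | (Polynomial.derivative q).eval t = 0} = {s₀})
    (hpk : polyMult p t₀ = k) (hqk : polyMult q s₀ = k)
    (hsign : (0 < p.eval t₀ ↔ 0 < q.eval s₀) ∧ (p.eval t₀ = 0 ↔ q.eval s₀ = 0)) :
    LipEquivPoly p q ↔
      ((∀ t : ℝ, p.eval t₀ ≤ p.eval t) ∧ (∀ t : ℝ, q.eval s₀ ≤ q.eval t)) ∨
      ((∀ t : ℝ, p.eval t ≤ p.eval t₀) ∧ (∀ t : ℝ, q.eval t ≤ q.eval s₀)) := by
  have hpnd : p.natDegree ≠ 0 := by omega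
  have hqnd : q.natDegree ≠ 0 := by omega
  have hcsel : ∃ c : ℝ, 0 < c ∧ c * p.eval t₀ = q.eval s₀ := by
    rcases lt_trichotomy (p.eval t₀) 0 with h | h | h
    · have hq0 : q.eval s₀ < 0 := by
        rcases lt_trichotomy (q.eval s₀) 0 with h' | h' | h'
        · exact h'
        · exact absurd (hsign.2.mpr h') (ne_of_lt h)
        · have := hsign.1.mpr h'; linarith
      exact ⟨q.eval s₀ / p.eval t₀, div_pos_of_neg_of_neg hq0 h, div_mul_cancel₀ _ (ne_of_lt h)⟩
    · exact ⟨1, one_pos, by rw [h, hsign.2.mp h]; ring⟩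
    · exact ⟨q.eval s₀ / p.eval t₀, div_pos (hsign.1.mp h) h, div_mul_cancel₀ _ (ne_of_gt h)⟩
  obtain ⟨c, hc, hcv⟩ := hcsel
  constructor
  · rintro ⟨φ, ⟨⟨hinj, hsurj⟩, A, B, hA, hB, hbnd⟩, c', hc', heq⟩
    rcases dichotomy p d hd heven hpd t₀ hpt with hminp | hmaxp <;>
      rcases dichotomy q d hd heven hqd s₀ hqs with hminq | hmaxq
    · exact Or.inl ⟨hminp, hminq⟩
    · exfalso
      obtain ⟨x, _, hx⟩ := unbounded_right p hpnd t₀ hminp ((|q.eval s₀| + 1) / c') 0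
      have h1 : |q.eval s₀| + 1 ≤ c' * p.eval x := by
        rw [div_le_iff₀ hc'] at hx
        linarith
      have h2 : q.eval (φ x) ≤ q.eval s₀ := hmaxq (φ x)
      rw [heq x] at h2
      have := le_abs_self (q.eval s₀)
      linarith
    · exfalso
      obtain ⟨x, _, hx⟩ := unbounded_right q hqnd s₀ hminq (c' * p.eval t₀ + 1) 0
      obtain ⟨t, ht⟩ := hsurj x
      have h1 : q.eval x = c' * p.eval t := by rw [← ht, heq]
      have h2 : c' * p.eval t ≤ c' * p.eval t₀ :=
        mul_le_mul_of_nonneg_left (hmaxp t) hc'.le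
      linarith
    · exact Or.inr ⟨hmaxp, hmaxq⟩
  · rintro (⟨hminp, hminq⟩ | ⟨hmaxp, hmaxq⟩)
    · exact main_min d k hd heven p q hpd hqd t₀ s₀ hpt hqs hpk hqk c hc hcv hminp hminq
    · have hset : {t : ℝ | (Polynomial.derivative (-p)).eval t = 0} = {t₀} := by
        rw [← hpt]; ext t; simp
      have hset' : {t : ℝ | (Polynomial.derivative (-q)).eval t = 0} = {s₀} := by
        rw [← hqs]; ext t; simp
      have hmain := main_min d k hd heven (-p) (-q) (by simp [hpd]) (by simp [hqd]) t₀ s₀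
        hset hset' (by rw [polyMult_neg]; exact hpk) (by rw [polyMult_neg]; exact hqk)
        c hc (by simp; linarith)
        (by intro t; simp; exact hmaxp t) (by intro t; simp; exact hmaxq t)
      obtain ⟨φ, hbl, c', hc', hval⟩ := hmain
      refine ⟨φ, hbl, c', hc', fun t => ?_⟩
      have := hval t
      simp at this
      linarith
end

section
/- Let φ : ℝ → ℝ be a bi-Lipschitz homeomorphism satisfying g ∘ φ = c·f for nonconstant polynomial functions f, g of the same degree and a constant c > 0. Then the limits of φ(t)/t as t → +∞ and as t → −∞ exist, are equal, and are a nonzero real number λ. -/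
open Filter Polynomial Real


lemma keylem (p q : Polynomial ℝ) (hp : 0 < p.natDegree) (hq : 0 < q.natDegree)
    (hdeg : p.natDegree = q.natDegree)
    (φ : ℝ → ℝ) (c : ℝ) (hc : 0 < c)
    (h : ∀ t : ℝ, q.eval (φ t) = c * p.eval t)
    (A : ℝ) (hA : 0 < A) (hlow : ∀ t : ℝ, 0 ≤ t → φ 0 + A * t ≤ φ t) :
    0 < c * p.leadingCoeff / q.leadingCoeff ∧
    Tendsto (fun t : ℝ => φ t / t) atTop
      (nhds ((c * p.leadingCoeff / q.leadingCoeff) ^ ((p.natDegree : ℝ)⁻¹))) := by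
  have hpne : p ≠ 0 := fun h0 => by simp [h0] at hp
  have hqne : q ≠ 0 := fun h0 => by simp [h0] at hq
  set n := p.natDegree with hn
  have hplead : p.leadingCoeff ≠ 0 := leadingCoeff_ne_zero.mpr hpne
  have hqlead : q.leadingCoeff ≠ 0 := leadingCoeff_ne_zero.mpr hqne
  -- φ tends to atTop
  have hφtop : Tendsto φ atTop atTop := by
    refine tendsto_atTop_mono' atTop (f₁ := fun t : ℝ => φ 0 + A * t) ?_ ?_
    · filter_upwards [eventually_ge_atTop (0:ℝ)] with t ht using hlow t ht
    · exact tendsto_atTop_add_const_left _ _ (tendsto_const_mul_atTop_of_pos hA |>.mpr tendsto_id)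
  -- polynomial ratio limits
  have hXdeg : ∀ r : Polynomial ℝ, r.natDegree = n → r ≠ 0 →
      Tendsto (fun x : ℝ => r.eval x / x ^ n) atTop (nhds r.leadingCoeff) := by
    intro r hr hrne
    have := Polynomial.div_tendsto_leadingCoeff_div_of_degree_eq r (X ^ n : ℝ[X])
      (by rw [degree_X_pow, degree_eq_natDegree hrne, hr])
    simpa using this
  have h2 : Tendsto (fun t : ℝ => q.eval (φ t) / (φ t) ^ n) atTop (nhds q.leadingCoeff) :=
    (hXdeg q hdeg.symm hqne).comp hφtop
  have h3 : Tendsto (fun t : ℝ => p.eval t / t ^ n) atTop (nhds p.leadingCoeff) :=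
    hXdeg p rfl hpne
  have h4 : Tendsto (fun t : ℝ => (c * (p.eval t / t ^ n)) / (q.eval (φ t) / (φ t) ^ n))
      atTop (nhds (c * p.leadingCoeff / q.leadingCoeff)) :=
    (h3.const_mul c).div h2 hqlead
  -- eventually the expression equals (φ t / t)^n
  have hev : ∀ᶠ t : ℝ in atTop,
      (c * (p.eval t / t ^ n)) / (q.eval (φ t) / (φ t) ^ n) = (φ t / t) ^ n := by
    have hpne0 : ∀ᶠ t : ℝ in atTop, p.eval t / t ^ n ≠ 0 := h3.eventually_ne hplead
    have hφpos : ∀ᶠ t : ℝ in atTop, 0 < φ t := hφtop.eventually_gt_atTop 0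
    filter_upwards [hpne0, hφpos, eventually_gt_atTop (0:ℝ)] with t hpt hφt ht
    have htn : t ^ n ≠ 0 := pow_ne_zero _ ht.ne'
    have hpe : p.eval t ≠ 0 := fun h0 => hpt (by simp [h0])
    have hφn : (φ t) ^ n ≠ 0 := pow_ne_zero _ hφt.ne'
    rw [h t, div_pow]
    field_simp
  have h5 : Tendsto (fun t : ℝ => (φ t / t) ^ n) atTop
      (nhds (c * p.leadingCoeff / q.leadingCoeff)) := h4.congr' hev
  -- positivity of the limit
  have hratio : ∀ᶠ t : ℝ in atTop, A / 2 ≤ φ t / t := by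
    have h1 : Tendsto (fun t : ℝ => A + φ 0 / t) atTop (nhds (A + 0)) :=
      (tendsto_const_nhds).add (tendsto_const_nhds.div_atTop tendsto_id)
    rw [add_zero] at h1
    filter_upwards [h1.eventually (eventually_ge_nhds (by linarith : A / 2 < A)),
      eventually_gt_atTop (0:ℝ)] with t h1t ht
    calc A / 2 ≤ A + φ 0 / t := h1t
      _ = (φ 0 + A * t) / t := by field_simp; ring
      _ ≤ φ t / t := (div_le_div_iff_of_pos_right ht).mpr (hlow t ht.le)
  set μ := c * p.leadingCoeff / q.leadingCoeff with hμ
  have hμpos : 0 < μ := by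
    have hev2 : ∀ᶠ t : ℝ in atTop, (A / 2) ^ n ≤ (φ t / t) ^ n := by
      filter_upwards [hratio] with t ht
      exact pow_le_pow_left₀ (by linarith) ht n
    have := ge_of_tendsto h5 hev2
    calc (0:ℝ) < (A / 2) ^ n := pow_pos (by linarith) n
      _ ≤ μ := this
  refine ⟨hμpos, ?_⟩
  have hcont : Tendsto (fun y : ℝ => y ^ ((n : ℝ)⁻¹)) (nhds μ) (nhds (μ ^ ((n : ℝ)⁻¹))) :=
    (Real.continuousAt_rpow_const μ _ (Or.inl hμpos.ne')).tendsto
  have h6 : Tendsto (fun t : ℝ => ((φ t / t) ^ n : ℝ) ^ ((n : ℝ)⁻¹)) atTop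
      (nhds (μ ^ ((n : ℝ)⁻¹))) := hcont.comp h5
  refine h6.congr' ?_
  have hnne : (n : ℝ) ≠ 0 := Nat.cast_ne_zero.mpr hp.ne'
  filter_upwards [hratio] with t ht
  have hx : (0:ℝ) ≤ φ t / t := le_trans (by linarith) ht
  rw [← Real.rpow_natCast (φ t / t) n, ← Real.rpow_mul hx, mul_inv_cancel₀ hnne, Real.rpow_one]

/-- For a bi-Lipschitz homeomorphism φ with g ∘ φ = c·f for nonconstant polynomial
functions f, g of the same degree and c > 0, the limits of φ(t)/t at +∞ and −∞
exist, coincide, and are a nonzero real number. -/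
theorem stmt12 (p q : Polynomial ℝ) (hp : 0 < p.natDegree) (hq : 0 < q.natDegree)
    (hdeg : p.natDegree = q.natDegree)
    (φ : ℝ → ℝ) (hφ : BiLipschitz φ) (c : ℝ) (hc : 0 < c)
    (h : ∀ t : ℝ, q.eval (φ t) = c * p.eval t) :
    ∃ l : ℝ, l ≠ 0 ∧
      Filter.Tendsto (fun t : ℝ => φ t / t) Filter.atTop (nhds l) ∧
      Filter.Tendsto (fun t : ℝ => φ t / t) Filter.atBot (nhds l) := by
  obtain ⟨⟨hinj, hsurj⟩, A, B, hA, hB, hAB⟩ := hφ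
  set n := p.natDegree with hn
  -- continuity of φ
  have hcont : Continuous φ := by
    refine (LipschitzWith.of_dist_le_mul (K := ⟨B, hB.le⟩) fun s t => ?_).continuous
    rw [Real.dist_eq, Real.dist_eq]
    exact (hAB s t).2
  -- polynomial reflections
  set p' : Polynomial ℝ := p.comp (-Polynomial.X) with hp'def
  set q' : Polynomial ℝ := q.comp (-Polynomial.X) with hq'def
  have hnegXdeg : (-Polynomial.X : Polynomial ℝ).natDegree = 1 := by
    rw [Polynomial.natDegree_neg, Polynomial.natDegree_X]
  have hp'deg : p'.natDegree = n := by
    rw [hp'def, Polynomial.natDegree_comp, hnegXdeg, mul_one]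
  have hq'deg : q'.natDegree = q.natDegree := by
    rw [hq'def, Polynomial.natDegree_comp, hnegXdeg, mul_one]
  have hnegXlead : (-Polynomial.X : Polynomial ℝ).leadingCoeff = -1 := by
    rw [Polynomial.leadingCoeff_neg, Polynomial.leadingCoeff_X]
  set e : ℝ := (-1 : ℝ) ^ n with hedef
  have he : e * e = 1 := by
    rw [hedef, ← pow_add]
    exact Even.neg_one_pow ⟨n, rfl⟩
  have hene : e ≠ 0 := fun h0 => by rw [h0, zero_mul] at he; norm_num at he
  have hp'lead : p'.leadingCoeff = p.leadingCoeff * e := by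
    rw [hp'def, Polynomial.leadingCoeff_comp (by rw [hnegXdeg]; norm_num), hnegXlead, hedef, hn]
  have hq'lead : q'.leadingCoeff = q.leadingCoeff * e := by
    rw [hq'def, Polynomial.leadingCoeff_comp (by rw [hnegXdeg]; norm_num), hnegXlead, hedef, hdeg]
  have hp'ev : ∀ t : ℝ, p'.eval t = p.eval (-t) := by
    intro t; rw [hp'def, Polynomial.eval_comp]; simp
  have hq'ev : ∀ t : ℝ, q'.eval t = q.eval (-t) := by
    intro t; rw [hq'def, Polynomial.eval_comp]; simp
  have hqlead : q.leadingCoeff ≠ 0 :=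
    Polynomial.leadingCoeff_ne_zero.mpr (fun h0 => by simp [h0] at hq)
  have hplead : p.leadingCoeff ≠ 0 :=
    Polynomial.leadingCoeff_ne_zero.mpr (fun h0 => by rw [h0] at hn; simp [hn] at hp)
  rcases hcont.strictMono_of_inj hinj with hm | hm
  · -- φ strictly monotone increasing
    have hlow1 : ∀ t : ℝ, 0 ≤ t → φ 0 + A * t ≤ φ t := by
      intro t ht
      have h1 := (hAB t 0).1
      rw [abs_of_nonneg (sub_nonneg.mpr (hm.monotone ht)),
        abs_of_nonneg (by simpa using ht)] at h1
      linarith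
    obtain ⟨hμ, hT⟩ := keylem p q hp hq hdeg φ c hc h A hA hlow1
    refine ⟨_, (Real.rpow_pos_of_pos hμ _).ne', hT, ?_⟩
    -- atBot via ψ t = -φ(-t)
    set ψ : ℝ → ℝ := fun t => -φ (-t) with hψ
    have hψeq : ∀ t : ℝ, q'.eval (ψ t) = c * p'.eval t := by
      intro t
      rw [hq'ev, hp'ev, hψ]
      simpa using h (-t)
    have hψlow : ∀ t : ℝ, 0 ≤ t → ψ 0 + A * t ≤ ψ t := by
      intro t ht
      have h1 := (hAB 0 (-t)).1
      have h2 : φ (-t) ≤ φ 0 := hm.monotone (by linarith)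
      rw [abs_of_nonneg (sub_nonneg.mpr h2), abs_of_nonneg (by simpa using ht)] at h1
      simp only [hψ, neg_zero]
      linarith
    obtain ⟨hμ', hT'⟩ := keylem p' q' (hp'deg ▸ hp) (hq'deg ▸ hq)
      (by rw [hp'deg, hq'deg, hdeg]) ψ c hc hψeq A hA hψlow
    have harg : c * p'.leadingCoeff / q'.leadingCoeff = c * p.leadingCoeff / q.leadingCoeff := by
      rw [hp'lead, hq'lead, ← mul_assoc, mul_div_mul_right _ _ hene]
    rw [harg, hp'deg] at hT'
    have := hT'.comp tendsto_neg_atBot_atTop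
    refine this.congr fun t => ?_
    show ψ (-t) / (-t) = φ t / t
    rw [hψ]; simp [neg_div_neg_eq]
  · -- φ strictly antitone
    -- atTop via χ t = -φ t
    set χ : ℝ → ℝ := fun t => -φ t with hχ
    have hχeq : ∀ t : ℝ, q'.eval (χ t) = c * p.eval t := by
      intro t; rw [hq'ev, hχ]; simpa using h t
    have hχlow : ∀ t : ℝ, 0 ≤ t → χ 0 + A * t ≤ χ t := by
      intro t ht
      have h1 := (hAB 0 t).1
      have h2 : φ t ≤ φ 0 := hm.antitone ht
      rw [abs_of_nonneg (sub_nonneg.mpr h2), abs_of_nonpos (by simpa using ht)] at h1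
      simp only [hχ]
      push_cast at h1 ⊢
      nlinarith [h1]
    obtain ⟨hμ2, hT2⟩ := keylem p q' hp (hq'deg ▸ hq) (by rw [hq'deg, ← hn]; exact hdeg) χ c hc hχeq A hA hχlow
    refine ⟨-((c * p.leadingCoeff / q'.leadingCoeff) ^ ((n : ℝ)⁻¹)), ?_, ?_, ?_⟩
    · exact neg_ne_zero.mpr (Real.rpow_pos_of_pos hμ2 _).ne'
    · have := hT2.neg
      refine this.congr fun t => ?_
      show -(χ t / t) = φ t / t
      rw [hχ]; simp [neg_div]
    · -- atBot via ω t = φ(-t)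
      set ω : ℝ → ℝ := fun t => φ (-t) with hω
      have hωeq : ∀ t : ℝ, q.eval (ω t) = c * p'.eval t := by
        intro t; rw [hp'ev, hω]; exact h (-t)
      have hωlow : ∀ t : ℝ, 0 ≤ t → ω 0 + A * t ≤ ω t := by
        intro t ht
        have h1 := (hAB (-t) 0).1
        have h2 : φ 0 ≤ φ (-t) := hm.antitone (by linarith)
        rw [abs_of_nonneg (sub_nonneg.mpr h2), abs_of_nonpos (by simpa using ht)] at h1
        simp only [hω, neg_zero]
        nlinarith [h1]
      obtain ⟨hμ3, hT3⟩ := keylem p' q (hp'deg ▸ hp) hq (by rw [hp'deg, hdeg]) ω c hc hωeq A hA hωlow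
      have harg : c * p'.leadingCoeff / q.leadingCoeff = c * p.leadingCoeff / q'.leadingCoeff := by
        rw [hp'lead, hq'lead, div_eq_div_iff hqlead (mul_ne_zero hqlead hene)]
        linear_combination c * p.leadingCoeff * q.leadingCoeff * he
      rw [harg, hp'deg] at hT3
      have := (hT3.comp tendsto_neg_atBot_atTop).neg
      refine this.congr fun t => ?_
      show -(ω (-t) / (-t)) = φ t / t
      rw [hω]; simp [neg_div, div_neg]
end
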